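/- arXiv:math/0006032 — 4 statements merged into one kernel-verified Lean document; each statement's English description precedes it below -/
import Mathlib

section
/- Let ξ, η be conjugate harmonic coordinates flattening an analytic arc-length parameterized curve Γ (so that ξ restricted to Γ is the arc-length and η = 0 on Γ), with inverse Ψ = (x̃,ỹ), and let γ(ξ,η) := 1/|∇ξ(Ψ(ξ,η))|. Then ∂_η(|∇ξ(Ψ)|²)(ξ,0) = -2·curv Γ(ξ), and consequently ∂_η γ(ξ,0) = curv Γ(ξ). -/
open Real Set

noncomputable def pdx (f : ℝ → ℝ → ℝ) (x y : ℝ) : ℝ := deriv (fun a => f a y) x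

noncomputable def pdy (f : ℝ → ℝ → ℝ) (x y : ℝ) : ℝ := deriv (fun b => f x b) y


private lemma slice1 {g : ℝ × ℝ → ℝ} {a b : ℝ}
    (hg : DifferentiableAt ℝ g (a, b)) :
    HasDerivAt (fun s => g (s, b)) (fderiv ℝ g (a, b) (1, 0)) a := by
  have h1 : HasDerivAt (fun s : ℝ => (s, b)) ((1 : ℝ), (0 : ℝ)) a :=
    (hasDerivAt_id a).prodMk (hasDerivAt_const a b)
  exact hg.hasFDerivAt.comp_hasDerivAt a h1

private lemma slice2 {g : ℝ × ℝ → ℝ} {a b : ℝ}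
    (hg : DifferentiableAt ℝ g (a, b)) :
    HasDerivAt (fun t => g (a, t)) (fderiv ℝ g (a, b) (0, 1)) b := by
  have h1 : HasDerivAt (fun t : ℝ => (a, t)) ((0 : ℝ), (1 : ℝ)) b :=
    (hasDerivAt_const b a).prodMk (hasDerivAt_id b)
  exact hg.hasFDerivAt.comp_hasDerivAt b h1

private lemma clairaut {X : ℝ × ℝ → ℝ} (hX : ContDiff ℝ 3 X) (p v w : ℝ × ℝ) :
    fderiv ℝ (fun q => fderiv ℝ X q v) p w = fderiv ℝ (fun q => fderiv ℝ X q w) p v := by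
  have hd : ∀ y, HasFDerivAt X (fderiv ℝ X y) y := fun y =>
    (hX.differentiable (by norm_num) y).hasFDerivAt
  have hf2 : ContDiff ℝ 2 (fderiv ℝ X) := hX.fderiv_right (by norm_num)
  have hA : HasFDerivAt (fderiv ℝ X) (fderiv ℝ (fderiv ℝ X) p) p :=
    (hf2.differentiable (by norm_num) p).hasFDerivAt
  have hev : ∀ u : ℝ × ℝ, HasFDerivAt (fun q => fderiv ℝ X q u)
      ((fderiv ℝ (fderiv ℝ X) p).flip u) p := by
    intro u
    have := hA.clm_apply (hasFDerivAt_const u p)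
    simpa using this
  rw [(hev v).fderiv, (hev w).fderiv]
  simpa [ContinuousLinearMap.flip_apply] using second_derivative_symmetric hd hA w v

/-- in conformal coordinates `(ξ,η)` flattening an arc-length
parameterized curve `Γ` (so `Ψ(·,0)` parameterizes `Γ` by arc-length), with
`|∇ξ(Ψ)|² = ((∂_ξ x̃)² + (∂_ξ ỹ)²)⁻¹` and `γ = 1/|∇ξ(Ψ)|`, one has
`∂_η(|∇ξ(Ψ)|²)(ξ,0) = -2 curv Γ(ξ)` and `∂_η γ(ξ,0) = curv Γ(ξ)`. -/
theorem stmt5 (V : Set (ℝ × ℝ)) (hV : IsOpen V)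
    (xt yt : ℝ → ℝ → ℝ)
    (hxt : ContDiff ℝ 3 (fun p : ℝ × ℝ => xt p.1 p.2))
    (hyt : ContDiff ℝ 3 (fun p : ℝ × ℝ => yt p.1 p.2))
    (hCR1 : ∀ a b : ℝ, (a, b) ∈ V → pdx xt a b = pdy yt a b)
    (hCR2 : ∀ a b : ℝ, (a, b) ∈ V → pdy xt a b = - pdx yt a b)
    (hnorm : ∀ a : ℝ, (a, 0) ∈ V → (pdx xt a 0) ^ 2 + (pdx yt a 0) ^ 2 = 1)
    (κ : ℝ → ℝ)
    (hκ : ∀ a : ℝ, (a, 0) ∈ V →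
      κ a = - pdx xt a 0 * pdx (fun s t => pdx yt s t) a 0
            + pdx yt a 0 * pdx (fun s t => pdx xt s t) a 0)
    (F γ : ℝ → ℝ → ℝ)
    (hF : ∀ a b : ℝ, F a b = (((pdx xt a b) ^ 2 + (pdx yt a b) ^ 2))⁻¹)
    (hγ : ∀ a b : ℝ, γ a b = Real.sqrt ((pdx xt a b) ^ 2 + (pdx yt a b) ^ 2)) :
    ∀ a : ℝ, (a, 0) ∈ V →
      pdy F a 0 = -2 * κ a ∧ pdy γ a 0 = κ a := by
  intro a haV
  set X : ℝ × ℝ → ℝ := fun p => xt p.1 p.2 with hXdef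
  set Y : ℝ × ℝ → ℝ := fun p => yt p.1 p.2 with hYdef
  have hXd : Differentiable ℝ X := hxt.differentiable (by norm_num)
  have hYd : Differentiable ℝ Y := hyt.differentiable (by norm_num)
  have pdxX : ∀ s t : ℝ, pdx xt s t = fderiv ℝ X (s, t) (1, 0) :=
    fun s t => (slice1 (hXd (s, t))).deriv
  have pdxY : ∀ s t : ℝ, pdx yt s t = fderiv ℝ Y (s, t) (1, 0) :=
    fun s t => (slice1 (hYd (s, t))).deriv
  have pdyX : ∀ s t : ℝ, pdy xt s t = fderiv ℝ X (s, t) (0, 1) :=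
    fun s t => (slice2 (hXd (s, t))).deriv
  have pdyY : ∀ s t : ℝ, pdy yt s t = fderiv ℝ Y (s, t) (0, 1) :=
    fun s t => (slice2 (hYd (s, t))).deriv
  have hD : ∀ (Z : ℝ × ℝ → ℝ), ContDiff ℝ 3 Z → ∀ v : ℝ × ℝ,
      Differentiable ℝ (fun q => fderiv ℝ Z q v) := by
    intro Z hZ v
    have h2 : ContDiff ℝ 2 (fderiv ℝ Z) := hZ.fderiv_right (m := 2) (by norm_num)
    exact (h2.clm_apply contDiff_const).differentiable (by norm_num)
  have hVs : ∀ᶠ s in nhds a, (s, (0:ℝ)) ∈ V := by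
    have hop : IsOpen {s : ℝ | (s, (0:ℝ)) ∈ V} :=
      hV.preimage (continuous_id.prodMk continuous_const)
    exact hop.mem_nhds haV
  -- derivative in b of pdx xt a ·
  set c1 : ℝ := fderiv ℝ (fun q => fderiv ℝ X q (1, 0)) (a, 0) (0, 1) with hc1def
  set c2 : ℝ := fderiv ℝ (fun q => fderiv ℝ Y q (1, 0)) (a, 0) (0, 1) with hc2def
  have h1 : HasDerivAt (fun b => pdx xt a b) c1 0 := by
    have h := slice2 (g := fun q => fderiv ℝ X q (1, 0)) (hD X hxt (1, 0) (a, 0))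
    exact h.congr_of_eventuallyEq (Filter.Eventually.of_forall fun t => pdxX a t)
  have h2 : HasDerivAt (fun b => pdx yt a b) c2 0 := by
    have h := slice2 (g := fun q => fderiv ℝ Y q (1, 0)) (hD Y hyt (1, 0) (a, 0))
    exact h.congr_of_eventuallyEq (Filter.Eventually.of_forall fun t => pdxY a t)
  -- Clairaut + CR identities
  have hc1 : c1 = - pdx (fun s t => pdx yt s t) a 0 := by
    rw [hc1def, clairaut hxt (a, 0) (1, 0) (0, 1)]
    have hsl : fderiv ℝ (fun q => fderiv ℝ X q (0, 1)) (a, 0) (1, 0)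
        = deriv (fun s => fderiv ℝ X (s, 0) (0, 1)) a :=
      (slice1 (hD X hxt (0, 1) (a, 0))).deriv.symm
    rw [hsl]
    have hev : (fun s => fderiv ℝ X (s, 0) (0, 1)) =ᶠ[nhds a]
        (fun s => -(pdx yt s 0)) := by
      filter_upwards [hVs] with s hs
      rw [← pdyX, hCR2 s 0 hs]
    rw [hev.deriv_eq]
    have : pdx (fun s t => pdx yt s t) a 0 = deriv (fun s => pdx yt s 0) a := rfl
    rw [this, deriv.fun_neg]
  have hc2 : c2 = pdx (fun s t => pdx xt s t) a 0 := by
    rw [hc2def, clairaut hyt (a, 0) (1, 0) (0, 1)]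
    have hsl : fderiv ℝ (fun q => fderiv ℝ Y q (0, 1)) (a, 0) (1, 0)
        = deriv (fun s => fderiv ℝ Y (s, 0) (0, 1)) a :=
      (slice1 (hD Y hyt (0, 1) (a, 0))).deriv.symm
    rw [hsl]
    have hev : (fun s => fderiv ℝ Y (s, 0) (0, 1)) =ᶠ[nhds a]
        (fun s => pdx xt s 0) := by
      filter_upwards [hVs] with s hs
      rw [← pdyY, ← hCR1 s 0 hs]
    rw [hev.deriv_eq]
    rfl
  -- the derivative of u(b) = pdx xt a b ^2 + pdx yt a b ^2
  have hu : HasDerivAt (fun b => (pdx xt a b) ^ 2 + (pdx yt a b) ^ 2)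
      (2 * κ a) 0 := by
    have := (h1.pow 2).add (h2.pow 2)
    refine this.congr_deriv ?_
    rw [hκ a haV, hc1, hc2]
    push_cast
    ring
  have hU0 : (pdx xt a 0) ^ 2 + (pdx yt a 0) ^ 2 = 1 := hnorm a haV
  constructor
  · have hFd : HasDerivAt (fun b => F a b) (-(2 * κ a) / ((pdx xt a 0) ^ 2 + (pdx yt a 0) ^ 2) ^ 2) 0 := by
      have hfe : (fun b => F a b) = fun b => ((pdx xt a b) ^ 2 + (pdx yt a b) ^ 2)⁻¹ :=
        funext fun b => hF a b
      rw [hfe]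
      exact hu.inv (by rw [hU0]; norm_num)
    have := hFd.deriv
    rw [show pdy F a 0 = deriv (fun b => F a b) 0 from rfl, this, hU0]
    ring
  · have hγd : HasDerivAt (fun b => γ a b)
        ((2 * κ a) / (2 * Real.sqrt ((pdx xt a 0) ^ 2 + (pdx yt a 0) ^ 2))) 0 := by
      have hfe : (fun b => γ a b) = fun b => Real.sqrt ((pdx xt a b) ^ 2 + (pdx yt a b) ^ 2) :=
        funext fun b => hγ a b
      rw [hfe]
      exact hu.sqrt (by rw [hU0]; norm_num)
    have := hγd.deriv
    rw [show pdy γ a 0 = deriv (fun b => γ a b) 0 from rfl, this, hU0, Real.sqrt_one]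
    ring
end

section
/- In the setting of the previous statement, ∂²_{ηη}(|∇ξ(Ψ)|²)(ξ,0) = 4[curv Γ(ξ)]², and consequently ∂²_{ηη}γ(ξ,0) = [curv Γ(ξ)]². -/
open Real Set

noncomputable def Dx (g : ℝ × ℝ → ℝ) (p : ℝ × ℝ) : ℝ := fderiv ℝ g p (1, 0)
noncomputable def Dy (g : ℝ × ℝ → ℝ) (p : ℝ × ℝ) : ℝ := fderiv ℝ g p (0, 1)

lemma hasDerivAt_sliceX {g : ℝ × ℝ → ℝ} {a b : ℝ} (hg : DifferentiableAt ℝ g (a, b)) :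
    HasDerivAt (fun s => g (s, b)) (Dx g (a, b)) a := by
  have hline : HasDerivAt (fun s : ℝ => (s, b)) ((1 : ℝ), (0 : ℝ)) a :=
    (hasDerivAt_id a).prodMk (hasDerivAt_const a b)
  exact hg.hasFDerivAt.comp_hasDerivAt a hline

lemma hasDerivAt_sliceY {g : ℝ × ℝ → ℝ} {a b : ℝ} (hg : DifferentiableAt ℝ g (a, b)) :
    HasDerivAt (fun t => g (a, t)) (Dy g (a, b)) b := by
  have hline : HasDerivAt (fun t : ℝ => (a, t)) ((0 : ℝ), (1 : ℝ)) b :=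
    (hasDerivAt_const b a).prodMk (hasDerivAt_id b)
  exact hg.hasFDerivAt.comp_hasDerivAt b hline

lemma contDiff_Dx {m n : WithTop ℕ∞} {g : ℝ × ℝ → ℝ} (hg : ContDiff ℝ n g)
    (h : m + 1 ≤ n) : ContDiff ℝ m (Dx g) :=
  (hg.fderiv_right h).clm_apply contDiff_const

lemma contDiff_Dy {m n : WithTop ℕ∞} {g : ℝ × ℝ → ℝ} (hg : ContDiff ℝ n g)
    (h : m + 1 ≤ n) : ContDiff ℝ m (Dy g) :=
  (hg.fderiv_right h).clm_apply contDiff_const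

lemma diffAt_of_contDiff {n : WithTop ℕ∞} {g : ℝ × ℝ → ℝ} (hg : ContDiff ℝ n g)
    (h : 1 ≤ n) (p : ℝ × ℝ) : DifferentiableAt ℝ g p :=
  ((hg.of_le h).differentiable one_ne_zero).differentiableAt

lemma Dx_Dy_swap {g : ℝ × ℝ → ℝ} (hg : ContDiff ℝ 2 g) (p : ℝ × ℝ) :
    Dx (Dy g) p = Dy (Dx g) p := by
  have hdg : Differentiable ℝ g := hg.differentiable two_ne_zero
  have hfd : DifferentiableAt ℝ (fderiv ℝ g) p :=
    ((hg.fderiv_right (m := 1) (by norm_num)).differentiable one_ne_zero).differentiableAt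
  have key := second_derivative_symmetric (fun y => (hdg y).hasFDerivAt) hfd.hasFDerivAt
    ((1 : ℝ), (0 : ℝ)) ((0 : ℝ), (1 : ℝ))
  have e1 : ∀ w : ℝ × ℝ, fderiv ℝ (fun q => fderiv ℝ g q w) p
      = (fderiv ℝ (fderiv ℝ g) p).flip w := by
    intro w
    have h := fderiv_clm_apply (c := fderiv ℝ g) (u := fun _ : ℝ × ℝ => w) hfd
      (differentiableAt_const w)
    simpa using h
  show fderiv ℝ (fun q => fderiv ℝ g q ((0 : ℝ), (1 : ℝ))) p (1, 0)
      = fderiv ℝ (fun q => fderiv ℝ g q ((1 : ℝ), (0 : ℝ))) p (0, 1)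
  rw [e1, e1]
  simpa using key

lemma pdx_eq_Dx {f : ℝ → ℝ → ℝ} {a b : ℝ}
    (hf : DifferentiableAt ℝ (fun p : ℝ × ℝ => f p.1 p.2) (a, b)) :
    pdx f a b = Dx (fun p : ℝ × ℝ => f p.1 p.2) (a, b) :=
  (hasDerivAt_sliceX hf).deriv

lemma pdy_eq_Dy {f : ℝ → ℝ → ℝ} {a b : ℝ}
    (hf : DifferentiableAt ℝ (fun p : ℝ × ℝ => f p.1 p.2) (a, b)) :
    pdy f a b = Dy (fun p : ℝ × ℝ => f p.1 p.2) (a, b) :=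
  (hasDerivAt_sliceY hf).deriv

/-- in conformal coordinates `(ξ,η)` flattening an arc-length
parameterized curve `Γ`, with `F = |∇ξ(Ψ)|² = ((∂_ξ x̃)² + (∂_ξ ỹ)²)⁻¹` and
`γ = 1/|∇ξ(Ψ)|`, one has `∂²_{ηη}(|∇ξ(Ψ)|²)(ξ,0) = 4[curv Γ(ξ)]²` and
consequently `∂²_{ηη}γ(ξ,0) = [curv Γ(ξ)]²`. -/
theorem stmt6 (V : Set (ℝ × ℝ)) (hV : IsOpen V)
    (xt yt : ℝ → ℝ → ℝ)
    (hxt : ContDiff ℝ 4 (fun p : ℝ × ℝ => xt p.1 p.2))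
    (hyt : ContDiff ℝ 4 (fun p : ℝ × ℝ => yt p.1 p.2))
    (hCR1 : ∀ a b : ℝ, (a, b) ∈ V → pdx xt a b = pdy yt a b)
    (hCR2 : ∀ a b : ℝ, (a, b) ∈ V → pdy xt a b = - pdx yt a b)
    (hnorm : ∀ a : ℝ, (a, 0) ∈ V → (pdx xt a 0) ^ 2 + (pdx yt a 0) ^ 2 = 1)
    (κ : ℝ → ℝ)
    (hκ : ∀ a : ℝ, (a, 0) ∈ V →
      κ a = - pdx xt a 0 * pdx (fun s t => pdx yt s t) a 0
            + pdx yt a 0 * pdx (fun s t => pdx xt s t) a 0)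
    (F γ : ℝ → ℝ → ℝ)
    (hF : ∀ a b : ℝ, F a b = (((pdx xt a b) ^ 2 + (pdx yt a b) ^ 2))⁻¹)
    (hγ : ∀ a b : ℝ, γ a b = Real.sqrt ((pdx xt a b) ^ 2 + (pdx yt a b) ^ 2)) :
    ∀ a : ℝ, (a, 0) ∈ V →
      pdy (fun s t => pdy F s t) a 0 = 4 * (κ a) ^ 2 ∧
      pdy (fun s t => pdy γ s t) a 0 = (κ a) ^ 2 := by
  intro a ha
  set X : ℝ × ℝ → ℝ := fun p => xt p.1 p.2 with hXdef
  set Y : ℝ × ℝ → ℝ := fun p => yt p.1 p.2 with hYdef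
  have hX4 : ContDiff ℝ 4 X := hxt
  have hY4 : ContDiff ℝ 4 Y := hyt
  have hU3 : ContDiff ℝ 3 (Dx X) := contDiff_Dx hX4 (by norm_num)
  have hW3 : ContDiff ℝ 3 (Dx Y) := contDiff_Dx hY4 (by norm_num)
  have hP3 : ContDiff ℝ 3 (Dy X) := contDiff_Dy hX4 (by norm_num)
  have hQ3 : ContDiff ℝ 3 (Dy Y) := contDiff_Dy hY4 (by norm_num)
  -- translations
  have tU : ∀ s t : ℝ, pdx xt s t = Dx X (s, t) := fun s t =>
    pdx_eq_Dx (diffAt_of_contDiff hX4 (by norm_num) _)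
  have tW : ∀ s t : ℝ, pdx yt s t = Dx Y (s, t) := fun s t =>
    pdx_eq_Dx (diffAt_of_contDiff hY4 (by norm_num) _)
  have tP : ∀ s t : ℝ, pdy xt s t = Dy X (s, t) := fun s t =>
    pdy_eq_Dy (diffAt_of_contDiff hX4 (by norm_num) _)
  have tQ : ∀ s t : ℝ, pdy yt s t = Dy Y (s, t) := fun s t =>
    pdy_eq_Dy (diffAt_of_contDiff hY4 (by norm_num) _)
  have cr1 : ∀ s t : ℝ, (s, t) ∈ V → Dx X (s, t) = Dy Y (s, t) := fun s t h => by
    rw [← tU, ← tQ]; exact hCR1 s t h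
  have cr2 : ∀ s t : ℝ, (s, t) ∈ V → Dy X (s, t) = -(Dx Y (s, t)) := fun s t h => by
    rw [← tP, ← tW]; exact hCR2 s t h
  -- eventual membership
  have hHor : ∀ s t : ℝ, (s, t) ∈ V → ∀ᶠ s' in nhds s, (s', t) ∈ V := by
    intro s t h
    have hc : ContinuousAt (fun s' : ℝ => (s', t)) s := by fun_prop
    exact hc.eventually_mem (hV.mem_nhds h)
  have hVer : ∀ s t : ℝ, (s, t) ∈ V → ∀ᶠ t' in nhds t, (s, t') ∈ V := by
    intro s t h
    have hc : ContinuousAt (fun t' : ℝ => (s, t')) t := by fun_prop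
    exact hc.eventually_mem (hV.mem_nhds h)
  -- differentiated CR relations (horizontal)
  have d1 : ∀ s t : ℝ, (s, t) ∈ V → Dx (Dy X) (s, t) = -(Dx (Dx Y) (s, t)) := by
    intro s t h
    have hev : (fun s' => Dy X (s', t)) =ᶠ[nhds s] fun s' => -(Dx Y (s', t)) := by
      filter_upwards [hHor s t h] with s' hs' using cr2 s' t hs'
    have h1 := (hasDerivAt_sliceX (diffAt_of_contDiff hP3 (by norm_num) (s, t))).deriv
    have h2 := ((hasDerivAt_sliceX (diffAt_of_contDiff hW3 (by norm_num) (s, t))).neg).deriv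
    rw [← h1, hev.deriv_eq]; exact h2
  have d2 : ∀ s t : ℝ, (s, t) ∈ V → Dx (Dy Y) (s, t) = Dx (Dx X) (s, t) := by
    intro s t h
    have hev : (fun s' => Dy Y (s', t)) =ᶠ[nhds s] fun s' => Dx X (s', t) := by
      filter_upwards [hHor s t h] with s' hs' using (cr1 s' t hs').symm
    have h1 := (hasDerivAt_sliceX (diffAt_of_contDiff hQ3 (by norm_num) (s, t))).deriv
    have h2 := (hasDerivAt_sliceX (diffAt_of_contDiff hU3 (by norm_num) (s, t))).deriv
    rw [← h1, hev.deriv_eq]; exact h2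
  have eDyU : ∀ s t : ℝ, (s, t) ∈ V → Dy (Dx X) (s, t) = -(Dx (Dx Y) (s, t)) := by
    intro s t h
    rw [← Dx_Dy_swap (hX4.of_le (by norm_num)) (s, t)]; exact d1 s t h
  have eDyW : ∀ s t : ℝ, (s, t) ∈ V → Dy (Dx Y) (s, t) = Dx (Dx X) (s, t) := by
    intro s t h
    rw [← Dx_Dy_swap (hY4.of_le (by norm_num)) (s, t)]; exact d2 s t h
  -- vertical differentiation of CR
  have vX : ∀ s t : ℝ, (s, t) ∈ V → Dy (Dy X) (s, t) = -(Dy (Dx Y) (s, t)) := by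
    intro s t h
    have hev : (fun t' => Dy X (s, t')) =ᶠ[nhds t] fun t' => -(Dx Y (s, t')) := by
      filter_upwards [hVer s t h] with t' ht' using cr2 s t' ht'
    have h1 := (hasDerivAt_sliceY (diffAt_of_contDiff hP3 (by norm_num) (s, t))).deriv
    have h2 := ((hasDerivAt_sliceY (diffAt_of_contDiff hW3 (by norm_num) (s, t))).neg).deriv
    rw [← h1, hev.deriv_eq]; exact h2
  have vY : ∀ s t : ℝ, (s, t) ∈ V → Dy (Dy Y) (s, t) = Dy (Dx X) (s, t) := by
    intro s t h
    have hev : (fun t' => Dy Y (s, t')) =ᶠ[nhds t] fun t' => Dx X (s, t') := by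
      filter_upwards [hVer s t h] with t' ht' using (cr1 s t' ht').symm
    have h1 := (hasDerivAt_sliceY (diffAt_of_contDiff hQ3 (by norm_num) (s, t))).deriv
    have h2 := (hasDerivAt_sliceY (diffAt_of_contDiff hU3 (by norm_num) (s, t))).deriv
    rw [← h1, hev.deriv_eq]; exact h2
  have hLapX : ∀ s t : ℝ, (s, t) ∈ V → Dy (Dy X) (s, t) = -(Dx (Dx X) (s, t)) := by
    intro s t h
    rw [vX s t h, ← Dx_Dy_swap (hY4.of_le (by norm_num)) (s, t), d2 s t h]
  have hLapY : ∀ s t : ℝ, (s, t) ∈ V → Dy (Dy Y) (s, t) = -(Dx (Dx Y) (s, t)) := by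
    intro s t h
    rw [vY s t h, ← Dx_Dy_swap (hX4.of_le (by norm_num)) (s, t), d1 s t h]
  -- second-order vertical derivatives of Dx X, Dx Y on V
  have hDyDyU : ∀ s t : ℝ, (s, t) ∈ V →
      Dy (Dy (Dx X)) (s, t) = -(Dx (Dx (Dx X)) (s, t)) := by
    intro s t h
    have hfun : Dy (Dx X) = Dx (Dy X) :=
      funext fun p => (Dx_Dy_swap (hX4.of_le (by norm_num)) p).symm
    rw [hfun, ← Dx_Dy_swap (hP3.of_le (by norm_num)) (s, t)]
    have hev : (fun s' => Dy (Dy X) (s', t)) =ᶠ[nhds s]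
        fun s' => -(Dx (Dx X) (s', t)) := by
      filter_upwards [hHor s t h] with s' hs' using hLapX s' t hs'
    have h1 := (hasDerivAt_sliceX (diffAt_of_contDiff
      (contDiff_Dy hP3 (by norm_num) : ContDiff ℝ 2 (Dy (Dy X))) (by norm_num) (s, t))).deriv
    have h2 := ((hasDerivAt_sliceX (diffAt_of_contDiff
      (contDiff_Dx hU3 (by norm_num) : ContDiff ℝ 2 (Dx (Dx X))) (by norm_num) (s, t))).neg).deriv
    rw [← h1, hev.deriv_eq]; exact h2
  have hDyDyW : ∀ s t : ℝ, (s, t) ∈ V →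
      Dy (Dy (Dx Y)) (s, t) = -(Dx (Dx (Dx Y)) (s, t)) := by
    intro s t h
    have hfun : Dy (Dx Y) = Dx (Dy Y) :=
      funext fun p => (Dx_Dy_swap (hY4.of_le (by norm_num)) p).symm
    rw [hfun, ← Dx_Dy_swap (hQ3.of_le (by norm_num)) (s, t)]
    have hev : (fun s' => Dy (Dy Y) (s', t)) =ᶠ[nhds s]
        fun s' => -(Dx (Dx Y) (s', t)) := by
      filter_upwards [hHor s t h] with s' hs' using hLapY s' t hs'
    have h1 := (hasDerivAt_sliceX (diffAt_of_contDiff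
      (contDiff_Dy hQ3 (by norm_num) : ContDiff ℝ 2 (Dy (Dy Y))) (by norm_num) (s, t))).deriv
    have h2 := ((hasDerivAt_sliceX (diffAt_of_contDiff
      (contDiff_Dx hW3 (by norm_num) : ContDiff ℝ 2 (Dx (Dx Y))) (by norm_num) (s, t))).neg).deriv
    rw [← h1, hev.deriv_eq]; exact h2
  -- the energy function
  set E : ℝ × ℝ → ℝ := fun p => Dx X p ^ 2 + Dx Y p ^ 2 with hEdef
  have hE3 : ContDiff ℝ 3 E := (hU3.pow 2).add (hW3.pow 2)
  have ExEq : ∀ s t : ℝ, Dx E (s, t)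
      = 2 * Dx X (s, t) * Dx (Dx X) (s, t) + 2 * Dx Y (s, t) * Dx (Dx Y) (s, t) := by
    intro s t
    have h1 := hasDerivAt_sliceX (diffAt_of_contDiff hU3 (by norm_num) (s, t))
    have h2 := hasDerivAt_sliceX (diffAt_of_contDiff hW3 (by norm_num) (s, t))
    have h4 := (hasDerivAt_sliceX (diffAt_of_contDiff hE3 (by norm_num) (s, t))).unique
      ((h1.pow 2).add (h2.pow 2))
    rw [h4]; push_cast; ring
  have EyEq : ∀ s t : ℝ, Dy E (s, t)
      = 2 * Dx X (s, t) * Dy (Dx X) (s, t) + 2 * Dx Y (s, t) * Dy (Dx Y) (s, t) := by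
    intro s t
    have h1 := hasDerivAt_sliceY (diffAt_of_contDiff hU3 (by norm_num) (s, t))
    have h2 := hasDerivAt_sliceY (diffAt_of_contDiff hW3 (by norm_num) (s, t))
    have h4 := (hasDerivAt_sliceY (diffAt_of_contDiff hE3 (by norm_num) (s, t))).unique
      ((h1.pow 2).add (h2.pow 2))
    rw [h4]; push_cast; ring
  have ExxEq : ∀ s t : ℝ, Dx (Dx E) (s, t)
      = 2 * Dx (Dx X) (s, t) ^ 2 + 2 * Dx X (s, t) * Dx (Dx (Dx X)) (s, t)
      + 2 * Dx (Dx Y) (s, t) ^ 2 + 2 * Dx Y (s, t) * Dx (Dx (Dx Y)) (s, t) := by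
    intro s t
    have hU := hasDerivAt_sliceX (diffAt_of_contDiff hU3 (by norm_num) (s, t))
    have hUx := hasDerivAt_sliceX (diffAt_of_contDiff
      (contDiff_Dx hU3 (by norm_num) : ContDiff ℝ 2 (Dx (Dx X))) (by norm_num) (s, t))
    have hW := hasDerivAt_sliceX (diffAt_of_contDiff hW3 (by norm_num) (s, t))
    have hWx := hasDerivAt_sliceX (diffAt_of_contDiff
      (contDiff_Dx hW3 (by norm_num) : ContDiff ℝ 2 (Dx (Dx Y))) (by norm_num) (s, t))
    have hformula : HasDerivAt (fun s' => Dx E (s', t))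
        ((2 * Dx (Dx X) (s, t)) * Dx (Dx X) (s, t)
          + (2 * Dx X (s, t)) * Dx (Dx (Dx X)) (s, t)
        + ((2 * Dx (Dx Y) (s, t)) * Dx (Dx Y) (s, t)
          + (2 * Dx Y (s, t)) * Dx (Dx (Dx Y)) (s, t))) s := by
      have heq : (fun s' => Dx E (s', t)) = fun s' =>
          2 * Dx X (s', t) * Dx (Dx X) (s', t) + 2 * Dx Y (s', t) * Dx (Dx Y) (s', t) :=
        funext fun s' => ExEq s' t
      rw [heq]
      exact ((hU.const_mul 2).mul hUx).add ((hW.const_mul 2).mul hWx)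
    have h4 := (hasDerivAt_sliceX (diffAt_of_contDiff
      (contDiff_Dx hE3 (by norm_num) : ContDiff ℝ 2 (Dx E)) (by norm_num) (s, t))).unique hformula
    rw [h4]; ring
  have EyyEq : ∀ s t : ℝ, Dy (Dy E) (s, t)
      = 2 * Dy (Dx X) (s, t) ^ 2 + 2 * Dx X (s, t) * Dy (Dy (Dx X)) (s, t)
      + 2 * Dy (Dx Y) (s, t) ^ 2 + 2 * Dx Y (s, t) * Dy (Dy (Dx Y)) (s, t) := by
    intro s t
    have hU := hasDerivAt_sliceY (diffAt_of_contDiff hU3 (by norm_num) (s, t))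
    have hUy := hasDerivAt_sliceY (diffAt_of_contDiff
      (contDiff_Dy hU3 (by norm_num) : ContDiff ℝ 2 (Dy (Dx X))) (by norm_num) (s, t))
    have hW := hasDerivAt_sliceY (diffAt_of_contDiff hW3 (by norm_num) (s, t))
    have hWy := hasDerivAt_sliceY (diffAt_of_contDiff
      (contDiff_Dy hW3 (by norm_num) : ContDiff ℝ 2 (Dy (Dx Y))) (by norm_num) (s, t))
    have hformula : HasDerivAt (fun t' => Dy E (s, t'))
        ((2 * Dy (Dx X) (s, t)) * Dy (Dx X) (s, t)
          + (2 * Dx X (s, t)) * Dy (Dy (Dx X)) (s, t)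
        + ((2 * Dy (Dx Y) (s, t)) * Dy (Dx Y) (s, t)
          + (2 * Dx Y (s, t)) * Dy (Dy (Dx Y)) (s, t))) t := by
      have heq : (fun t' => Dy E (s, t')) = fun t' =>
          2 * Dx X (s, t') * Dy (Dx X) (s, t') + 2 * Dx Y (s, t') * Dy (Dx Y) (s, t') :=
        funext fun t' => EyEq s t'
      rw [heq]
      exact ((hU.const_mul 2).mul hUy).add ((hW.const_mul 2).mul hWy)
    have h4 := (hasDerivAt_sliceY (diffAt_of_contDiff
      (contDiff_Dy hE3 (by norm_num) : ContDiff ℝ 2 (Dy E)) (by norm_num) (s, t))).unique hformula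
    rw [h4]; ring
  -- normalization along the line
  have hnormE : ∀ s : ℝ, (s, 0) ∈ V → E (s, 0) = 1 := by
    intro s h
    have := hnorm s h
    rw [tU, tW] at this
    exact this
  have hE0 : E (a, 0) = 1 := hnormE a ha
  have lin1 : ∀ s : ℝ, (s, 0) ∈ V → Dx E (s, 0) = 0 := by
    intro s h
    have hev : (fun s' => E (s', 0)) =ᶠ[nhds s] fun _ => (1 : ℝ) := by
      filter_upwards [hHor s 0 h] with s' hs' using hnormE s' hs'
    have h1 := (hasDerivAt_sliceX (diffAt_of_contDiff hE3 (by norm_num) (s, 0))).deriv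
    rw [← h1, hev.deriv_eq, deriv_const]
  have lin2 : Dx (Dx E) (a, 0) = 0 := by
    have hev : (fun s' => Dx E (s', 0)) =ᶠ[nhds a] fun _ => (0 : ℝ) := by
      filter_upwards [hHor a 0 ha] with s' hs' using lin1 s' hs'
    have h1 := (hasDerivAt_sliceX (diffAt_of_contDiff
      (contDiff_Dx hE3 (by norm_num) : ContDiff ℝ 2 (Dx E)) (by norm_num) (a, 0))).deriv
    rw [← h1, hev.deriv_eq, deriv_const]
  -- curvature in Dx form
  have hκa : κ a = -(Dx X (a, 0)) * Dx (Dx Y) (a, 0) + Dx Y (a, 0) * Dx (Dx X) (a, 0) := by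
    rw [hκ a ha, tU, tW]
    have e1 : (fun s t => pdx yt s t) = fun s t => Dx Y (s, t) :=
      funext fun s => funext fun t => tW s t
    have e2 : (fun s t => pdx xt s t) = fun s t => Dx X (s, t) :=
      funext fun s => funext fun t => tU s t
    rw [e1, e2]
    have h1 : pdx (fun s t => Dx Y (s, t)) a 0 = Dx (Dx Y) (a, 0) :=
      pdx_eq_Dx (diffAt_of_contDiff hW3 (by norm_num) (a, 0))
    have h2 : pdx (fun s t => Dx X (s, t)) a 0 = Dx (Dx X) (a, 0) :=
      pdx_eq_Dx (diffAt_of_contDiff hU3 (by norm_num) (a, 0))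
    rw [h1, h2]
  -- key values at (a, 0)
  have hnorm1 : Dx X (a, 0) ^ 2 + Dx Y (a, 0) ^ 2 = 1 := hnormE a ha
  have S1 : 2 * Dx X (a, 0) * Dx (Dx X) (a, 0) + 2 * Dx Y (a, 0) * Dx (Dx Y) (a, 0) = 0 := by
    rw [← ExEq a 0]; exact lin1 a ha
  have S2 : 2 * Dx (Dx X) (a, 0) ^ 2 + 2 * Dx X (a, 0) * Dx (Dx (Dx X)) (a, 0)
      + 2 * Dx (Dx Y) (a, 0) ^ 2 + 2 * Dx Y (a, 0) * Dx (Dx (Dx Y)) (a, 0) = 0 := by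
    rw [← ExxEq a 0]; exact lin2
  have hκsq : κ a ^ 2 = Dx (Dx X) (a, 0) ^ 2 + Dx (Dx Y) (a, 0) ^ 2 := by
    rw [hκa]
    nlinarith [S1, hnorm1, sq_nonneg (Dx X (a, 0) * Dx (Dx X) (a, 0) + Dx Y (a, 0) * Dx (Dx Y) (a, 0))]
  have hEy0 : Dy E (a, 0) = 2 * κ a := by
    rw [EyEq a 0, eDyU a 0 ha, eDyW a 0 ha, hκa]; ring
  have hEyy0 : Dy (Dy E) (a, 0) = 4 * κ a ^ 2 := by
    rw [EyyEq a 0, hDyDyU a 0 ha, hDyDyW a 0 ha, eDyU a 0 ha, eDyW a 0 ha, hκsq]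
    linear_combination (-1 : ℝ) * S2
  -- slice derivatives of E in the vertical direction
  have hEslice : ∀ t : ℝ, HasDerivAt (fun t' => E (a, t')) (Dy E (a, t)) t := fun t =>
    hasDerivAt_sliceY (diffAt_of_contDiff hE3 (by norm_num) (a, t))
  have hEyslice : HasDerivAt (fun t => Dy E (a, t)) (Dy (Dy E) (a, 0)) 0 :=
    hasDerivAt_sliceY (diffAt_of_contDiff
      (contDiff_Dy hE3 (by norm_num) : ContDiff ℝ 2 (Dy E)) (by norm_num) (a, 0))
  have hEne : ∀ᶠ t in nhds 0, E (a, t) ≠ 0 := by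
    have hc : ContinuousAt (fun t : ℝ => E (a, t)) 0 := (hEslice 0).continuousAt
    exact hc.eventually_ne (by rw [hE0]; norm_num)
  constructor
  · show deriv (fun t => pdy F a t) 0 = 4 * κ a ^ 2
    have hFev : (fun t => pdy F a t) =ᶠ[nhds 0]
        fun t => -(Dy E (a, t)) * ((E (a, t)) ^ 2)⁻¹ := by
      filter_upwards [hEne] with t ht
      have hFa : (fun t' => F a t') = fun t' => (E (a, t'))⁻¹ := by
        funext t'
        rw [hF a t', tU, tW]
      show deriv (fun t' => F a t') t = -(Dy E (a, t)) * ((E (a, t)) ^ 2)⁻¹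
      rw [hFa, ((hEslice t).fun_inv ht).deriv, div_eq_mul_inv]
    rw [hFev.deriv_eq]
    have hpow : HasDerivAt (fun t => E (a, t) ^ 2)
        ((2 : ℕ) * E (a, 0) ^ (2 - 1) * Dy E (a, 0)) 0 := (hEslice 0).pow 2
    have hne2 : E (a, 0) ^ 2 ≠ 0 := by rw [hE0]; norm_num
    have hmul := (hEyslice.fun_neg).fun_mul (hpow.fun_inv hne2)
    rw [hmul.deriv, hE0, hEy0, hEyy0]
    norm_num
    try ring
  · show deriv (fun t => pdy γ a t) 0 = κ a ^ 2
    have hγev : (fun t => pdy γ a t) =ᶠ[nhds 0]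
        fun t => Dy E (a, t) * (2 * Real.sqrt (E (a, t)))⁻¹ := by
      filter_upwards [hEne] with t ht
      have hγa : (fun t' => γ a t') = fun t' => Real.sqrt (E (a, t')) := by
        funext t'
        rw [hγ a t', tU, tW]
      show deriv (fun t' => γ a t') t = Dy E (a, t) * (2 * Real.sqrt (E (a, t)))⁻¹
      rw [hγa, ((hEslice t).sqrt ht).deriv, div_eq_mul_inv]
    rw [hγev.deriv_eq]
    have hsqrt := (hEslice 0).sqrt (by rw [hE0]; norm_num)
    have hden := hsqrt.const_mul (2 : ℝ)
    have hdenne : 2 * Real.sqrt (E (a, 0)) ≠ 0 := by rw [hE0, Real.sqrt_one]; norm_num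
    have hmul := hEyslice.fun_mul (hden.fun_inv hdenne)
    rw [hmul.deriv, hE0, hEy0, hEyy0, Real.sqrt_one]
    norm_num
    try ring
end

section
/- Let l > 0 and let k ≥ 0. Consider the Riccati Cauchy problem -τ' + τ² - (κ(ξ))² = -π²/(16 l²), τ(0) = 0, on [0, l], where κ is continuous with ‖κ‖_∞ ≤ k. Then the solution τ exists on all of [0, l] and satisfies ‖τ‖_∞ ≤ max{π/(4l), k}. -/
open Real Set

open Filter Topology



/-- First-crossing lemma: if `d 0 ≤ 0`, `d` is continuous on `[0, ξ₁]`, and at every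
zero of `d` in `[0, ξ₁)` the function has a strictly negative derivative, then `d ξ₁ ≤ 0`. -/
lemma first_cross (d : ℝ → ℝ) (ξ₁ : ℝ) (hξ₁ : 0 ≤ ξ₁)
    (hd0 : d 0 ≤ 0)
    (hcont : ∀ ξ ∈ Icc 0 ξ₁, ContinuousAt d ξ)
    (hderiv : ∀ ξ ∈ Ico 0 ξ₁, d ξ = 0 → ∃ c, c < 0 ∧ HasDerivAt d c ξ) :
    d ξ₁ ≤ 0 := by
  by_contra hgt
  push_neg at hgt
  set A : Set ℝ := {ξ | ξ ∈ Icc 0 ξ₁ ∧ d ξ ≤ 0} with hA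
  have hA0 : (0:ℝ) ∈ A := ⟨⟨le_rfl, hξ₁⟩, hd0⟩
  have hAbdd : BddAbove A := ⟨ξ₁, fun x hx => hx.1.2⟩
  set ξ₀ := sSup A with hξ₀
  have hξ₀Icc : ξ₀ ∈ Icc 0 ξ₁ :=
    ⟨le_csSup hAbdd hA0, csSup_le ⟨0, hA0⟩ fun x hx => hx.1.2⟩
  have hpos : ∀ ξ ∈ Ioc ξ₀ ξ₁, 0 < d ξ := by
    intro ξ hξ
    by_contra hle
    push_neg at hle
    have : ξ ∈ A := ⟨⟨hξ₀Icc.1.trans hξ.1.le, hξ.2⟩, hle⟩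
    exact absurd (le_csSup hAbdd this) (not_le.2 hξ.1)
  have hmemcl : ξ₀ ∈ closure A := csSup_mem_closure ⟨0, hA0⟩ hAbdd
  have hne : (𝓝[A] ξ₀).NeBot := mem_closure_iff_nhdsWithin_neBot.mp hmemcl
  have hdle : d ξ₀ ≤ 0 := by
    have h1 : Tendsto d (𝓝[A] ξ₀) (𝓝 (d ξ₀)) :=
      ((hcont ξ₀ hξ₀Icc).continuousWithinAt (s := A)).tendsto
    exact le_of_tendsto h1 (eventually_mem_nhdsWithin.mono fun ξ hξ => hξ.2)
  have hξ₀lt : ξ₀ < ξ₁ := lt_of_le_of_ne hξ₀Icc.2 (fun h => by rw [h] at hdle; linarith)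
  have hIoc : Ioc ξ₀ ξ₁ ∈ 𝓝[>] ξ₀ := Ioc_mem_nhdsGT_of_mem ⟨le_rfl, hξ₀lt⟩
  have hdge : 0 ≤ d ξ₀ := by
    have h1 : Tendsto d (𝓝[>] ξ₀) (𝓝 (d ξ₀)) :=
      ((hcont ξ₀ hξ₀Icc).continuousWithinAt (s := Ioi ξ₀)).tendsto
    exact ge_of_tendsto h1 (Filter.eventually_of_mem hIoc fun ξ hξ => (hpos ξ hξ).le)
  have hd₀ : d ξ₀ = 0 := le_antisymm hdle hdge
  obtain ⟨c, hc, hdc⟩ := hderiv ξ₀ ⟨hξ₀Icc.1, hξ₀lt⟩ hd₀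
  have hslope : Tendsto (slope d ξ₀) (𝓝[>] ξ₀) (𝓝 c) :=
    (hasDerivAt_iff_tendsto_slope.mp hdc).mono_left
      (nhdsWithin_mono _ fun x hx => ne_of_gt hx)
  have hev : ∀ᶠ ξ in 𝓝[>] ξ₀, slope d ξ₀ ξ < 0 :=
    hslope.eventually (eventually_lt_nhds hc)
  obtain ⟨ξ, hs, hmem⟩ := (hev.and (Filter.eventually_of_mem hIoc fun ξ hξ => hξ)).exists
  have h1 : 0 < slope d ξ₀ ξ := by
    rw [slope_def_field, hd₀]
    exact div_pos (by simpa using hpos ξ hmem) (sub_pos.2 hmem.1)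
  linarith

-- helper: 1/cos x ^2 = 1 + tan x ^2
lemma one_div_cos_sq (x : ℝ) (h : Real.cos x ≠ 0) :
    1 / Real.cos x ^ 2 = 1 + Real.tan x ^ 2 := by
  rw [Real.tan_eq_sin_div_cos]
  have h2 := Real.sin_sq_add_cos_sq x
  field_simp
  linarith

-- helper: derivative of b * tan (b * ξ)
lemma hasDerivAt_mul_tan (b ξ : ℝ) (h : Real.cos (b * ξ) ≠ 0) :
    HasDerivAt (fun s => b * Real.tan (b * s))
      (b ^ 2 + (b * Real.tan (b * ξ)) ^ 2) ξ := by
  have h1 : HasDerivAt (fun s : ℝ => b * s) b ξ := by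
    simpa using (hasDerivAt_id ξ).const_mul b
  have h2 := (Real.hasDerivAt_tan h).comp ξ h1
  have h3 := h2.const_mul b
  refine h3.congr_deriv ?_
  rw [one_div_cos_sq _ h]
  ring

set_option maxHeartbeats 2000000 in
/-- the Riccati Cauchy problem
`-τ' + τ² - κ² = -π²/(16 l²)`, `τ(0) = 0` on `[0,l]`, with `κ` continuous and
`‖κ‖_∞ ≤ k`, has a solution defined on all of `[0,l]` with
`‖τ‖_∞ ≤ max {π/(4l), k}`. -/
theorem stmt7 (l k : ℝ) (hl : 0 < l) (hk : 0 ≤ k) (κ : ℝ → ℝ)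
    (hκc : Continuous κ) (hκb : ∀ ξ ∈ Icc (0:ℝ) l, |κ ξ| ≤ k) :
    ∃ τ : ℝ → ℝ, τ 0 = 0 ∧
      (∀ ξ ∈ Icc (0:ℝ) l,
        HasDerivAt τ (τ ξ ^ 2 - κ ξ ^ 2 + π ^ 2 / (16 * l ^ 2)) ξ) ∧
      ∀ ξ ∈ Icc (0:ℝ) l, |τ ξ| ≤ max (π / (4 * l)) k := by
  have hπ := Real.pi_pos
  set a : ℝ := π / (4 * l) with ha
  have ha0 : 0 < a := div_pos hπ (by linarith)
  set M : ℝ := max a k with hM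
  have hM0 : 0 < M := lt_max_of_lt_left ha0
  have hkM : k ≤ M := le_max_right _ _
  have haM : a ≤ M := le_max_left _ _
  -- truncation
  set g : ℝ → ℝ := fun x => max (-M) (min x M) with hg
  have hgmem : ∀ x, g x ∈ Icc (-M) M := by
    intro x
    constructor
    · exact le_max_left _ _
    · exact max_le (by linarith) (min_le_right _ _)
  have hgabs : ∀ x, |g x| ≤ M := fun x => abs_le.2 ⟨(hgmem x).1, (hgmem x).2⟩
  have hgid : ∀ x, |x| ≤ M → g x = x := by
    intro x hx
    rw [abs_le] at hx
    simp [hg, min_eq_left hx.2, max_eq_right hx.1]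
  have hgle : ∀ x, 0 ≤ x → g x ≤ x := by
    intro x hx
    exact max_le (by linarith) (min_le_left _ _)
  have hgnn : ∀ x, 0 ≤ x → 0 ≤ g x := by
    intro x hx
    exact le_max_of_le_right (le_min hx hM0.le)
  have hglip : LipschitzWith 1 g := by
    have h1 : LipschitzWith 1 (fun x : ℝ => min x M) := by
      simpa using LipschitzWith.min LipschitzWith.id (LipschitzWith.const' M (K:=1))
    have h2 : LipschitzWith 1 (fun x : ℝ => max (-M) x) := by
      simpa using LipschitzWith.max (LipschitzWith.const' (-M) (K:=1)) LipschitzWith.id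
    have h := h2.comp h1
    rw [one_mul] at h
    exact h
  -- clamped κ
  set κ' : ℝ → ℝ := fun t => κ (max 0 (min t l)) with hκ'
  have hκ'c : Continuous κ' :=
    hκc.comp ((continuous_const.max (continuous_id.min continuous_const)))
  have hκ'b : ∀ t, |κ' t| ≤ k := by
    intro t
    apply hκb
    constructor
    · exact le_max_left _ _
    · exact max_le hl.le (min_le_right _ _)
  have hκ'eq : ∀ t ∈ Icc (0:ℝ) l, κ' t = κ t := by
    intro t ht
    simp only [hκ']
    rw [min_eq_left ht.2, max_eq_right ht.1]
  -- the vector field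
  set v : ℝ → ℝ → ℝ := fun t x => g x ^ 2 + (a ^ 2 - κ' t ^ 2) with hv
  set C : ℝ := M ^ 2 + a ^ 2 + k ^ 2 with hC
  have hC0 : 0 ≤ C := by positivity
  set L : NNReal := Real.toNNReal (2 * M) with hL
  have hLcoe : (L : ℝ) = 2 * M := Real.coe_toNNReal _ (by linarith)
  have ht0 : (0:ℝ) ∈ Icc (-1:ℝ) (l + 1) := ⟨by linarith, by linarith⟩
  have hpl : IsPicardLindelof v (tmin := -1) (tmax := l + 1) ⟨0, ht0⟩ 0 (Real.toNNReal (C * (l + 2))) 0 (Real.toNNReal C) L := by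
    constructor
    · intro t _
      apply LipschitzWith.lipschitzOnWith
      rw [lipschitzWith_iff_dist_le_mul]
      intro x y
      simp only [hv, Real.dist_eq]
      have h0 : g x ^ 2 + (a ^ 2 - κ' t ^ 2) - (g y ^ 2 + (a ^ 2 - κ' t ^ 2))
          = (g x + g y) * (g x - g y) := by ring
      rw [h0, abs_mul, hLcoe]
      have h2 : |g x + g y| ≤ 2 * M := by
        have := hgabs x; have := hgabs y
        calc |g x + g y| ≤ |g x| + |g y| := abs_add_le _ _
          _ ≤ 2 * M := by linarith
      have h3 : |g x - g y| ≤ |x - y| := by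
        have := hglip.dist_le_mul x y
        simpa [Real.dist_eq] using this
      calc |g x + g y| * |g x - g y| ≤ (2 * M) * |x - y| :=
            mul_le_mul h2 h3 (abs_nonneg _) (by linarith)
        _ = 2 * M * |x - y| := by ring
    · intro x _
      exact (continuous_const.add (continuous_const.sub (hκ'c.pow 2))).continuousOn
    · intro t _ x _
      rw [Real.coe_toNNReal _ hC0]
      simp only [hv, Real.norm_eq_abs]
      have h1 : g x ^ 2 ≤ M ^ 2 := sq_le_sq' (by linarith [(hgmem x).1]) (hgmem x).2
      have h2 : κ' t ^ 2 ≤ k ^ 2 := sq_le_sq' (by linarith [abs_le.1 (hκ'b t)]) (abs_le.1 (hκ'b t)).2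
      have h3 : 0 ≤ g x ^ 2 := sq_nonneg _
      have h4 : 0 ≤ κ' t ^ 2 := sq_nonneg _
      rw [abs_le]
      constructor <;> [skip; skip] <;> simp only [hC] <;> nlinarith [sq_nonneg a]
    · have : max (l + 1 - 0) (0 - -1) = l + 1 := by
        rw [max_eq_left] <;> linarith
      rw [Real.coe_toNNReal _ hC0, Real.coe_toNNReal _ (by positivity), NNReal.coe_zero, sub_zero]
      rw [max_eq_left (by linarith)]
      nlinarith
  obtain ⟨τ, hτ0, hτd⟩ := hpl.exists_eq_forall_mem_Icc_hasDerivWithinAt₀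
  replace hτ0 : τ 0 = 0 := hτ0
  -- upgrade to HasDerivAt on (-1, l+1)
  have hD : ∀ ξ ∈ Icc (-1:ℝ) (l + 1), ξ ∈ Ioo (-1:ℝ) (l+1) → HasDerivAt τ (v ξ (τ ξ)) ξ := by
    intro ξ hξ hξ'
    exact (hτd ξ hξ).hasDerivAt (Icc_mem_nhds hξ'.1 hξ'.2)
  have hD' : ∀ ξ ∈ Icc (0:ℝ) l, HasDerivAt τ (v ξ (τ ξ)) ξ := by
    intro ξ hξ
    exact hD ξ ⟨by linarith [hξ.1], by linarith [hξ.2]⟩ ⟨by linarith [hξ.1], by linarith [hξ.2]⟩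
  -- lower bound
  have hk2M : k ^ 2 ≤ M ^ 2 := pow_le_pow_left₀ hk hkM 2
  have hlow : ∀ ξ₁ ∈ Icc (0:ℝ) l, -M ≤ τ ξ₁ := by
    intro ξ₁ hξ₁
    have hsub : Icc 0 ξ₁ ⊆ Icc 0 l := Icc_subset_Icc le_rfl hξ₁.2
    have key := first_cross (fun ξ => -τ ξ - M) ξ₁ hξ₁.1
      (by simp [hτ0]; linarith)
      (fun ξ hξ => ((hD' ξ (hsub hξ)).continuousAt.neg.sub continuousAt_const))
      ?_
    · have key' : -τ ξ₁ - M ≤ 0 := key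
      linarith
    · intro ξ hξ hd0
      have hd0' : -τ ξ - M = 0 := hd0
      have hξm : ξ ∈ Icc (0:ℝ) l := hsub ⟨hξ.1, hξ.2.le⟩
      have hτξ : τ ξ = -M := by linarith
      refine ⟨-(v ξ (τ ξ)), ?_, ((hD' ξ hξm).neg).sub_const M⟩
      have h1 : g (τ ξ) = -M := by
        rw [hτξ]; exact hgid (-M) (by rw [abs_neg, abs_of_nonneg hM0.le])
      have h2 : κ' ξ ^ 2 ≤ k ^ 2 := by
        have := hκ'b ξ
        nlinarith [abs_nonneg (κ' ξ), sq_abs (κ' ξ)]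
      simp only [hv, h1]
      nlinarith
  -- upper bound against b * tan (b ξ) for a < b < 2a
  have hal : a * l = π / 4 := by
    rw [ha]; field_simp
  have hup2 : ∀ ξ₁ ∈ Icc (0:ℝ) l, ∀ b ∈ Ioo a (2*a), τ ξ₁ ≤ b * Real.tan (b * ξ₁) := by
    intro ξ₁ hξ₁ b hb
    have hb0 : 0 < b := ha0.trans hb.1
    have hbl : b * l < π/2 := by
      have h2a : 2 * a = π / (2 * l) := by rw [ha]; field_simp; ring
      have := mul_lt_mul_of_pos_right hb.2 hl
      rw [h2a] at this
      calc b * l < π / (2*l) * l := this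
        _ = π / 2 := by field_simp
    have hrange : ∀ ξ ∈ Icc 0 ξ₁, 0 ≤ b * ξ ∧ b * ξ < π/2 := by
      intro ξ hξ
      constructor
      · exact mul_nonneg hb0.le hξ.1
      · have h1 : b * ξ ≤ b * l :=
          mul_le_mul_of_nonneg_left (hξ.2.trans hξ₁.2) hb0.le
        linarith
    have hcos : ∀ ξ ∈ Icc 0 ξ₁, Real.cos (b * ξ) ≠ 0 := by
      intro ξ hξ
      obtain ⟨h1, h2⟩ := hrange ξ hξ
      exact ne_of_gt (Real.cos_pos_of_mem_Ioo ⟨by linarith, h2⟩)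
    have hsub : Icc 0 ξ₁ ⊆ Icc 0 l := Icc_subset_Icc le_rfl hξ₁.2
    have key := first_cross (fun ξ => τ ξ - b * Real.tan (b * ξ)) ξ₁ hξ₁.1
      (by simp [hτ0])
      (fun ξ hξ => ((hD' ξ (hsub hξ)).continuousAt.sub
        (hasDerivAt_mul_tan b ξ (hcos ξ hξ)).continuousAt))
      ?_
    · have key' : τ ξ₁ - b * Real.tan (b * ξ₁) ≤ 0 := key
      linarith
    · intro ξ hξ hd0
      have hd0' : τ ξ - b * Real.tan (b * ξ) = 0 := hd0
      have hξI : ξ ∈ Icc 0 ξ₁ := ⟨hξ.1, hξ.2.le⟩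
      have hξm : ξ ∈ Icc (0:ℝ) l := hsub hξI
      set w : ℝ := b * Real.tan (b * ξ) with hw
      have hτξ : τ ξ = w := by rw [hw]; linarith
      refine ⟨v ξ (τ ξ) - (b ^ 2 + w ^ 2), ?_,
        (hD' ξ hξm).sub (hasDerivAt_mul_tan b ξ (hcos ξ hξI))⟩
      have hw0 : 0 ≤ w := by
        obtain ⟨h1, h2⟩ := hrange ξ hξI
        exact mul_nonneg hb0.le
          (Real.tan_nonneg_of_nonneg_of_le_pi_div_two h1 h2.le)
      have hgw1 : g (τ ξ) ≤ w := by rw [hτξ]; exact hgle w hw0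
      have hgw0 : 0 ≤ g (τ ξ) := by rw [hτξ]; exact hgnn w hw0
      have hgw2 : g (τ ξ) ^ 2 ≤ w ^ 2 := by nlinarith
      simp only [hv]
      nlinarith [sq_nonneg (κ' ξ), hb.1, ha0, mul_self_nonneg (b - a)]
  -- pass to the limit b → a⁺
  have hup : ∀ ξ₁ ∈ Icc (0:ℝ) l, τ ξ₁ ≤ M := by
    intro ξ₁ hξ₁
    have haξ : a * ξ₁ ≤ π / 4 := by
      calc a * ξ₁ ≤ a * l := mul_le_mul_of_nonneg_left hξ₁.2 ha0.le
        _ = π / 4 := hal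
    have haξ0 : 0 ≤ a * ξ₁ := mul_nonneg ha0.le hξ₁.1
    have hcos : Real.cos (a * ξ₁) ≠ 0 :=
      ne_of_gt (Real.cos_pos_of_mem_Ioo ⟨by linarith, by linarith⟩)
    have hta : τ ξ₁ ≤ a * Real.tan (a * ξ₁) := by
      have hcont2 : ContinuousAt (fun b => b * Real.tan (b * ξ₁)) a := by
        have h1 : ContinuousAt Real.tan (a * ξ₁) := Real.continuousAt_tan.2 hcos
        have h2 : ContinuousAt (fun b : ℝ => b * ξ₁) a :=
          continuousAt_id.mul continuousAt_const
        have h3 : ContinuousAt (fun b : ℝ => Real.tan (b * ξ₁)) a := ContinuousAt.comp (g := Real.tan) (f := fun b : ℝ => b * ξ₁) h1 h2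
        exact continuousAt_id.mul h3
      have htends : Tendsto (fun b => b * Real.tan (b * ξ₁)) (𝓝[>] a)
          (𝓝 (a * Real.tan (a * ξ₁))) :=
        hcont2.continuousWithinAt.tendsto
      have hev : ∀ᶠ b in 𝓝[>] a, τ ξ₁ ≤ b * Real.tan (b * ξ₁) :=
        Filter.eventually_of_mem (Ioo_mem_nhdsGT_of_mem ⟨le_rfl, by linarith⟩)
          (fun b hb => hup2 ξ₁ hξ₁ b hb)
      exact ge_of_tendsto htends hev
    have h2 : Real.tan (a * ξ₁) ≤ 1 := by
      rw [← Real.tan_pi_div_four]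
      rcases eq_or_lt_of_le haξ with h | h
      · rw [h]
      · exact le_of_lt (Real.strictMonoOn_tan ⟨by linarith, by linarith⟩
          ⟨by linarith, by linarith⟩ h)
    have : a * Real.tan (a * ξ₁) ≤ a := by nlinarith
    linarith
  -- conclusion
  refine ⟨τ, hτ0, ?_, ?_⟩
  · intro ξ hξ
    have h := hD' ξ hξ
    have habs : |τ ξ| ≤ M := abs_le.2 ⟨hlow ξ hξ, hup ξ hξ⟩
    have heq : v ξ (τ ξ) = τ ξ ^ 2 - κ ξ ^ 2 + π ^ 2 / (16 * l ^ 2) := by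
      simp only [hv]
      rw [hgid _ habs, hκ'eq ξ hξ, ha]
      field_simp
      ring
    rwa [heq] at h
  · intro ξ hξ
    exact abs_le.2 ⟨hlow ξ hξ, (hup ξ hξ).trans_eq rfl⟩
end

section
/- For the rectangle A = (0,a) × (0,b) and Γ = (0,a) × {0}, the function v(x,y) = sin(πx/a)·sinh(π(b−y)/a) is positive on A, harmonic, vanishes on ∂A∖Γ, and satisfies ∂v/∂ν = λ v on Γ with λ = π/(a·tanh(πb/a)). Consequently K(Γ,A) = π/(a·tanh(πb/a)). -/
open Real Set MeasureTheory

/-- partial derivative in the first coordinate -/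
noncomputable def pdX (v : ℝ × ℝ → ℝ) (p : ℝ × ℝ) : ℝ := deriv (fun a => v (a, p.2)) p.1

/-- partial derivative in the second coordinate -/
noncomputable def pdY (v : ℝ × ℝ → ℝ) (p : ℝ × ℝ) : ℝ := deriv (fun b => v (p.1, b)) p.2

/-- Dirichlet energy `∫_A |∇v|²` -/
noncomputable def energy (A : Set (ℝ × ℝ)) (v : ℝ × ℝ → ℝ) : ℝ :=
  ∫ p in A, ((pdX v p) ^ 2 + (pdY v p) ^ 2)

/-- boundary integral `∫_Γ v² dH¹` -/
noncomputable def bInt (Γ : Set (ℝ × ℝ)) (v : ℝ × ℝ → ℝ) : ℝ :=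
  ∫ p in Γ, (v p) ^ 2 ∂(μH[1])

/-- admissible competitors for the variational problem defining `K(Γ,A)`:
`v ∈ H¹(A)`, `∫_Γ v² dH¹ = 1`, `v = 0` on `∂A∖Γ` -/
def Adm (A Γ : Set (ℝ × ℝ)) : Set ((ℝ × ℝ) → ℝ) :=
  {v | ContinuousOn v (closure A) ∧ DifferentiableOn ℝ v A ∧
    MeasureTheory.IntegrableOn (fun p => (pdX v p) ^ 2 + (pdY v p) ^ 2) A ∧
    bInt Γ v = 1 ∧ ∀ p ∈ frontier A \ Γ, v p = 0}

/-- the quantity `K(Γ,A)` of the paper -/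
noncomputable def Kconst (Γ A : Set (ℝ × ℝ)) : ℝ := sInf (energy A '' Adm A Γ)

/-- a planar open set has Lipschitz boundary: near each boundary point, after a
rotation, the set is the open region above the graph of a Lipschitz function -/
def HasLipschitzBoundary (A : Set (ℝ × ℝ)) : Prop :=
  ∀ p ∈ frontier A, ∃ (θ : ℝ) (g : ℝ → ℝ) (L r : ℝ), 0 < r ∧
    LipschitzWith (Real.toNNReal L) g ∧
    ∀ q ∈ Metric.ball p r,
      (q ∈ A ↔ g (Real.cos θ * (q.1 - p.1) + Real.sin θ * (q.2 - p.2)) <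
        (- Real.sin θ * (q.1 - p.1) + Real.cos θ * (q.2 - p.2)))

/-- Laplacian -/
noncomputable def lap (v : ℝ × ℝ → ℝ) (p : ℝ × ℝ) : ℝ :=
  deriv (fun a => pdX v (a, p.2)) p.1 + deriv (fun b => pdY v (p.1, b)) p.2

/-! ### Auxiliary derivative lemmas -/

section Aux

lemma hd_lin (c d : ℝ) (x : ℝ) : HasDerivAt (fun x : ℝ => c * x / d) (c / d) x := by
  simpa using ((hasDerivAt_id x).const_mul c).div_const d

lemma hd_lin' (c d e : ℝ) (y : ℝ) : HasDerivAt (fun y : ℝ => c * (e - y) / d) (-(c / d)) y := by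
  have h := (((hasDerivAt_id y).const_sub e).const_mul c).div_const d
  simp only [id_eq] at h
  exact h.congr_deriv (by ring)

lemma hd_sin (a x : ℝ) :
    HasDerivAt (fun x => Real.sin (π * x / a)) (π / a * Real.cos (π * x / a)) x := by
  have h := (Real.hasDerivAt_sin (π * x / a)).comp x (hd_lin π a x)
  exact h.congr_deriv (mul_comm _ _)

lemma hd_cos (a x : ℝ) :
    HasDerivAt (fun x => Real.cos (π * x / a)) (-(π / a * Real.sin (π * x / a))) x := by
  have h := (Real.hasDerivAt_cos (π * x / a)).comp x (hd_lin π a x)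
  rw [Function.comp_def] at h
  exact h.congr_deriv (by ring)

lemma hd_sinh (a b y : ℝ) :
    HasDerivAt (fun y => Real.sinh (π * (b - y) / a)) (-(π / a) * Real.cosh (π * (b - y) / a)) y := by
  have h := (Real.hasDerivAt_sinh (π * (b - y) / a)).comp y (hd_lin' π a b y)
  rw [Function.comp_def] at h
  exact h.congr_deriv (by ring)

lemma hd_cosh (a b y : ℝ) :
    HasDerivAt (fun y => Real.cosh (π * (b - y) / a)) (-(π / a) * Real.sinh (π * (b - y) / a)) y := by
  have h := (Real.hasDerivAt_cosh (π * (b - y) / a)).comp y (hd_lin' π a b y)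
  rw [Function.comp_def] at h
  exact h.congr_deriv (by ring)

/-! ### The eigenfunction and its derivatives -/

noncomputable def eig (a b : ℝ) : ℝ × ℝ → ℝ :=
  fun p => Real.sin (π * p.1 / a) * Real.sinh (π * (b - p.2) / a)

lemma hd_eigX (a b : ℝ) (p : ℝ × ℝ) :
    HasDerivAt (fun x => eig a b (x, p.2))
      (π / a * Real.cos (π * p.1 / a) * Real.sinh (π * (b - p.2) / a)) p.1 := by
  simpa [eig, mul_assoc] using (hd_sin a p.1).mul_const (Real.sinh (π * (b - p.2) / a))

lemma hd_eigY (a b : ℝ) (p : ℝ × ℝ) :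
    HasDerivAt (fun y => eig a b (p.1, y))
      (-(π / a) * Real.sin (π * p.1 / a) * Real.cosh (π * (b - p.2) / a)) p.2 := by
  have h := (hd_sinh a b p.2).const_mul (Real.sin (π * p.1 / a))
  simp only [eig]
  exact h.congr_deriv (by ring)

lemma pdX_eig (a b : ℝ) (p : ℝ × ℝ) :
    pdX (eig a b) p = π / a * Real.cos (π * p.1 / a) * Real.sinh (π * (b - p.2) / a) :=
  (hd_eigX a b p).deriv

lemma pdY_eig (a b : ℝ) (p : ℝ × ℝ) :
    pdY (eig a b) p = -(π / a) * Real.sin (π * p.1 / a) * Real.cosh (π * (b - p.2) / a) :=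
  (hd_eigY a b p).deriv

lemma lap_eig (a b : ℝ) (p : ℝ × ℝ) : lap (eig a b) p = 0 := by
  have h1 : (fun x => pdX (eig a b) (x, p.2)) =
      fun x => π / a * Real.cos (π * x / a) * Real.sinh (π * (b - p.2) / a) := by
    funext x; exact pdX_eig a b (x, p.2)
  have h2 : (fun y => pdY (eig a b) (p.1, y)) =
      fun y => -(π / a) * Real.sin (π * p.1 / a) * Real.cosh (π * (b - y) / a) := by
    funext y; exact pdY_eig a b (p.1, y)
  have d1 : HasDerivAt (fun x => π / a * Real.cos (π * x / a) * Real.sinh (π * (b - p.2) / a))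
      (π / a * -(π / a * Real.sin (π * p.1 / a)) * Real.sinh (π * (b - p.2) / a)) p.1 := by
    have := (((hd_cos a p.1).const_mul (π / a)).mul_const (Real.sinh (π * (b - p.2) / a)))
    convert this using 1
  have d2 : HasDerivAt (fun y => -(π / a) * Real.sin (π * p.1 / a) * Real.cosh (π * (b - y) / a))
      (-(π / a) * Real.sin (π * p.1 / a) * (-(π / a) * Real.sinh (π * (b - p.2) / a))) p.2 := by
    have := ((hd_cosh a b p.2).const_mul (-(π / a) * Real.sin (π * p.1 / a)))
    convert this using 1
  rw [lap, h1, h2, d1.deriv, d2.deriv]; ring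

/-! ### Elementary algebraic identities -/

lemma alg1 (a s c : ℝ) (ha : a ≠ 0) (hsc : s ^ 2 + c ^ 2 = 1) :
    s ^ 2 = 1 / 2 - a / (2 * π) * (π / a * c * c + s * -(π / a * s)) := by
  have h : a / (2 * π) * (π / a * c * c + s * -(π / a * s)) = (c ^ 2 - s ^ 2) / 2 := by
    field_simp [Real.pi_ne_zero]
    ring
  rw [h]; linarith

lemma alg1' (a s c : ℝ) (ha : a ≠ 0) (hsc : s ^ 2 + c ^ 2 = 1) :
    c ^ 2 = 1 / 2 + a / (2 * π) * (π / a * c * c + s * -(π / a * s)) := by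
  have h : a / (2 * π) * (π / a * c * c + s * -(π / a * s)) = (c ^ 2 - s ^ 2) / 2 := by
    field_simp [Real.pi_ne_zero]
    ring
  rw [h]; linarith

lemma alg2 (a s c : ℝ) (ha : a ≠ 0) (hsc : c ^ 2 = s ^ 2 + 1) :
    s ^ 2 = -(a / (2 * π)) * (-(π / a) * c * c + s * (-(π / a) * s)) - 1 / 2 := by
  have h : -(a / (2 * π)) * (-(π / a) * c * c + s * (-(π / a) * s)) = (c ^ 2 + s ^ 2) / 2 := by
    field_simp [Real.pi_ne_zero]
    ring
  rw [h]; linarith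

lemma alg2' (a s c : ℝ) (ha : a ≠ 0) (hsc : c ^ 2 = s ^ 2 + 1) :
    c ^ 2 = -(a / (2 * π)) * (-(π / a) * c * c + s * (-(π / a) * s)) + 1 / 2 := by
  have h : -(a / (2 * π)) * (-(π / a) * c * c + s * (-(π / a) * s)) = (c ^ 2 + s ^ 2) / 2 := by
    field_simp [Real.pi_ne_zero]
    ring
  rw [h]; linarith

/-! ### Interval integrals -/

lemma int_sin_sq {a : ℝ} (ha : 0 < a) : ∫ x in (0:ℝ)..a, Real.sin (π * x / a) ^ 2 = a / 2 := by
  have hderiv : ∀ x ∈ uIcc (0:ℝ) a, HasDerivAt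
      (fun x => x / 2 - a / (2 * π) * (Real.sin (π * x / a) * Real.cos (π * x / a)))
      (Real.sin (π * x / a) ^ 2) x := by
    intro x _
    have h := ((hasDerivAt_id x).div_const 2).sub
      (((hd_sin a x).mul (hd_cos a x)).const_mul (a / (2 * π)))
    refine h.congr_deriv ?_
    exact (alg1 a _ _ ha.ne' (Real.sin_sq_add_cos_sq (π * x / a))).symm
  have hc : Continuous fun x : ℝ => Real.sin (π * x / a) ^ 2 := by fun_prop
  rw [intervalIntegral.integral_eq_sub_of_hasDerivAt hderiv (hc.intervalIntegrable 0 a)]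
  rw [mul_div_assoc, div_self ha.ne', mul_one, Real.sin_pi]
  simp

lemma int_cos_sq {a : ℝ} (ha : 0 < a) : ∫ x in (0:ℝ)..a, Real.cos (π * x / a) ^ 2 = a / 2 := by
  have hderiv : ∀ x ∈ uIcc (0:ℝ) a, HasDerivAt
      (fun x => x / 2 + a / (2 * π) * (Real.sin (π * x / a) * Real.cos (π * x / a)))
      (Real.cos (π * x / a) ^ 2) x := by
    intro x _
    have h := ((hasDerivAt_id x).div_const 2).add
      (((hd_sin a x).mul (hd_cos a x)).const_mul (a / (2 * π)))
    refine h.congr_deriv ?_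
    exact (alg1' a _ _ ha.ne' (Real.sin_sq_add_cos_sq (π * x / a))).symm
  have hc : Continuous fun x : ℝ => Real.cos (π * x / a) ^ 2 := by fun_prop
  rw [intervalIntegral.integral_eq_sub_of_hasDerivAt hderiv (hc.intervalIntegrable 0 a)]
  rw [mul_div_assoc, div_self ha.ne', mul_one, Real.sin_pi]
  simp

lemma int_sinh_sq {a b : ℝ} (ha : 0 < a) :
    ∫ y in (0:ℝ)..b, Real.sinh (π * (b - y) / a) ^ 2
      = a / (2 * π) * (Real.sinh (π * b / a) * Real.cosh (π * b / a)) - b / 2 := by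
  have hderiv : ∀ y ∈ uIcc (0:ℝ) b, HasDerivAt
      (fun y => -(a / (2 * π)) * (Real.sinh (π * (b - y) / a) * Real.cosh (π * (b - y) / a)) - y / 2)
      (Real.sinh (π * (b - y) / a) ^ 2) y := by
    intro y _
    have h := ((((hd_sinh a b y).mul (hd_cosh a b y)).const_mul (-(a / (2 * π)))).sub
      ((hasDerivAt_id y).div_const 2))
    refine h.congr_deriv ?_
    exact (alg2 a _ _ ha.ne' (Real.cosh_sq (π * (b - y) / a))).symm
  have hc : Continuous fun y : ℝ => Real.sinh (π * (b - y) / a) ^ 2 := by fun_prop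
  rw [intervalIntegral.integral_eq_sub_of_hasDerivAt hderiv (hc.intervalIntegrable 0 b)]
  simp [Real.sinh_zero]
  ring

lemma int_cosh_sq {a b : ℝ} (ha : 0 < a) :
    ∫ y in (0:ℝ)..b, Real.cosh (π * (b - y) / a) ^ 2
      = a / (2 * π) * (Real.sinh (π * b / a) * Real.cosh (π * b / a)) + b / 2 := by
  have hderiv : ∀ y ∈ uIcc (0:ℝ) b, HasDerivAt
      (fun y => -(a / (2 * π)) * (Real.sinh (π * (b - y) / a) * Real.cosh (π * (b - y) / a)) + y / 2)
      (Real.cosh (π * (b - y) / a) ^ 2) y := by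
    intro y _
    have h := ((((hd_sinh a b y).mul (hd_cosh a b y)).const_mul (-(a / (2 * π)))).add
      ((hasDerivAt_id y).div_const 2))
    refine h.congr_deriv ?_
    exact (alg2' a _ _ ha.ne' (Real.cosh_sq (π * (b - y) / a))).symm
  have hc : Continuous fun y : ℝ => Real.cosh (π * (b - y) / a) ^ 2 := by fun_prop
  rw [intervalIntegral.integral_eq_sub_of_hasDerivAt hderiv (hc.intervalIntegrable 0 b)]
  simp [Real.sinh_zero]
  ring

/-! ### The 1-dimensional Hausdorff measure on a horizontal line -/

lemma line_iso : Isometry (fun x : ℝ => ((x, 0) : ℝ × ℝ)) := by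
  apply Isometry.of_dist_eq
  intro x y
  simp [Prod.dist_eq, Real.dist_eq]

lemma line_me : MeasurableEmbedding (fun x : ℝ => ((x, 0) : ℝ × ℝ)) :=
  line_iso.isClosedEmbedding.measurableEmbedding

lemma hausdorff_line_map (s : Set ℝ) :
    (μH[1] : Measure (ℝ × ℝ)).restrict (s ×ˢ ({0} : Set ℝ)) =
      Measure.map (fun x : ℝ => ((x, 0) : ℝ × ℝ)) (volume.restrict s) := by
  set e := fun x : ℝ => ((x, 0) : ℝ × ℝ) with he
  ext t ht
  rw [Measure.restrict_apply ht, line_me.map_apply, Measure.restrict_apply (line_me.measurable ht)]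
  have himg : t ∩ s ×ˢ ({0} : Set ℝ) = e '' (e ⁻¹' t ∩ s) := by
    ext ⟨x, y⟩
    simp only [mem_inter_iff, mem_prod, mem_singleton_iff, mem_image, mem_preimage, he]
    constructor
    · rintro ⟨htx, hxs, rfl⟩; exact ⟨x, ⟨htx, hxs⟩, rfl⟩
    · rintro ⟨x', ⟨ht', hs'⟩, hx⟩
      obtain ⟨rfl, rfl⟩ : x' = x ∧ (0 : ℝ) = y := by
        constructor <;> [exact congrArg Prod.fst hx; exact congrArg Prod.snd hx]
      exact ⟨ht', hs', rfl⟩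
  rw [himg, line_iso.hausdorffMeasure_image (Or.inl one_pos.le),
    MeasureTheory.hausdorffMeasure_real]

lemma integral_line (s : Set ℝ) (f : ℝ × ℝ → ℝ) :
    ∫ p in s ×ˢ ({0} : Set ℝ), f p ∂(μH[1]) = ∫ x in s, f (x, 0) := by
  rw [hausdorff_line_map, line_me.integral_map]

/-! ### Geometry of the rectangle -/

lemma closA {a b : ℝ} (ha : 0 < a) (hb : 0 < b) :
    closure (Ioo (0:ℝ) a ×ˢ Ioo (0:ℝ) b) = Icc 0 a ×ˢ Icc 0 b := by
  rw [closure_prod_eq, closure_Ioo ha.ne, closure_Ioo hb.ne]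

lemma frontA {a b : ℝ} (ha : 0 < a) (hb : 0 < b) :
    frontier (Ioo (0:ℝ) a ×ˢ Ioo (0:ℝ) b)
      = Icc 0 a ×ˢ ({0, b} : Set ℝ) ∪ ({0, a} : Set ℝ) ×ˢ Icc 0 b := by
  rw [frontier_prod_eq, closure_Ioo ha.ne, closure_Ioo hb.ne, frontier_Ioo ha, frontier_Ioo hb]

lemma eig_vanish {a b : ℝ} (ha : 0 < a) (hb : 0 < b) :
    ∀ p ∈ frontier (Ioo (0:ℝ) a ×ˢ Ioo (0:ℝ) b) \ (Ioo (0:ℝ) a ×ˢ ({0} : Set ℝ)),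
      eig a b p = 0 := by
  rintro ⟨x, y⟩ ⟨hf, hΓ⟩
  rw [frontA ha hb] at hf
  have hsin0 : Real.sin (π * (0:ℝ) / a) = 0 := by simp
  have hsina : Real.sin (π * a / a) = 0 := by
    rw [mul_div_assoc, div_self ha.ne', mul_one, Real.sin_pi]
  rcases hf with ⟨hx, hy⟩ | ⟨hx, hy⟩
  · rcases hy with rfl | rfl
    · -- y = 0, so x ∉ Ioo 0 a, hence x = 0 or x = a
      have hxnot : x ∉ Ioo (0:ℝ) a := fun hmem => hΓ ⟨hmem, rfl⟩
      have : x = 0 ∨ x = a := by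
        rcases hx with ⟨h0, h1⟩
        rcases eq_or_lt_of_le h0 with h | h
        · exact Or.inl h.symm
        · rcases eq_or_lt_of_le h1 with h' | h'
          · exact Or.inr h'
          · exact absurd ⟨h, h'⟩ hxnot
      rcases this with rfl | rfl
      · simp [eig, hsin0]
      · simp [eig, hsina]
    · -- y = b
      simp [eig, sub_self]
  · rcases hx with rfl | rfl
    · simp [eig, hsin0]
    · simp [eig, hsina]

/-! ### Measurability of partial derivatives -/

lemma measurable_pdX_of_continuous {g : ℝ × ℝ → ℝ} (hg : Continuous g) :
    Measurable (pdX g) := by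
  have h := measurable_deriv_with_param (𝕜 := ℝ) (f := fun y x => g (x, y))
    (hg.comp continuous_swap)
  exact h.comp measurable_swap

lemma measurable_pdY_of_continuous {g : ℝ × ℝ → ℝ} (hg : Continuous g) :
    Measurable (pdY g) :=
  measurable_deriv_with_param (𝕜 := ℝ) (f := fun x y => g (x, y)) hg

lemma exists_cont_ext (w : ℝ × ℝ → ℝ) (s : Set (ℝ × ℝ)) (hs : IsClosed s)
    (hw : ContinuousOn w s) : ∃ g : ℝ × ℝ → ℝ, Continuous g ∧ ∀ p ∈ s, g p = w p := by
  obtain ⟨g, hg⟩ := ContinuousMap.exists_restrict_eq (Y := ℝ) hs ⟨s.restrict w, hw.restrict⟩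
  exact ⟨g, g.continuous, fun p hp => congrFun (congrArg DFunLike.coe hg) ⟨p, hp⟩⟩

lemma pdX_congr_on_open {w g : ℝ × ℝ → ℝ} {U : Set (ℝ × ℝ)} (hU : IsOpen U)
    (h : ∀ q ∈ U, g q = w q) {p : ℝ × ℝ} (hp : p ∈ U) : pdX w p = pdX g p := by
  apply Filter.EventuallyEq.deriv_eq
  have hcont : Continuous fun x : ℝ => ((x, p.2) : ℝ × ℝ) := by fun_prop
  have hx : ∀ᶠ x in nhds p.1, ((x, p.2) : ℝ × ℝ) ∈ U := by
    have := hcont.continuousAt (x := p.1) |>.preimage_mem_nhds (hU.mem_nhds (by simpa using hp))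
    exact this
  exact hx.mono fun x hxU => (h _ hxU).symm

lemma pdY_congr_on_open {w g : ℝ × ℝ → ℝ} {U : Set (ℝ × ℝ)} (hU : IsOpen U)
    (h : ∀ q ∈ U, g q = w q) {p : ℝ × ℝ} (hp : p ∈ U) : pdY w p = pdY g p := by
  apply Filter.EventuallyEq.deriv_eq
  have hcont : Continuous fun y : ℝ => ((p.1, y) : ℝ × ℝ) := by fun_prop
  have hy : ∀ᶠ y in nhds p.2, ((p.1, y) : ℝ × ℝ) ∈ U := by
    have := hcont.continuousAt (x := p.2) |>.preimage_mem_nhds (hU.mem_nhds (by simpa using hp))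
    exact this
  exact hy.mono fun y hyU => (h _ hyU).symm

end Aux

/-! ### Upper bound: the normalized eigenfunction is admissible with energy `lam` -/

lemma restrict_rect_prod (a b : ℝ) :
    (volume : Measure (ℝ × ℝ)).restrict (Ioo (0:ℝ) a ×ˢ Ioo (0:ℝ) b)
      = (volume.restrict (Ioo (0:ℝ) a)).prod (volume.restrict (Ioo (0:ℝ) b)) := by
  rw [MeasureTheory.Measure.volume_eq_prod, Measure.prod_restrict]

lemma cont_int_Ioo {f : ℝ → ℝ} (hf : Continuous f) (c d : ℝ) :
    Integrable f (volume.restrict (Ioo c d)) :=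
  (hf.integrableOn_Icc (a := c) (b := d)).mono_set Ioo_subset_Icc_self

lemma ioo_int_sin_sq {a : ℝ} (ha : 0 < a) :
    ∫ x in Ioo (0:ℝ) a, Real.sin (π * x / a) ^ 2 = a / 2 := by
  rw [← integral_Ioc_eq_integral_Ioo, ← intervalIntegral.integral_of_le ha.le]
  exact int_sin_sq ha

lemma ioo_int_cos_sq {a : ℝ} (ha : 0 < a) :
    ∫ x in Ioo (0:ℝ) a, Real.cos (π * x / a) ^ 2 = a / 2 := by
  rw [← integral_Ioc_eq_integral_Ioo, ← intervalIntegral.integral_of_le ha.le]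
  exact int_cos_sq ha

lemma ioo_int_sinh_sq {a b : ℝ} (ha : 0 < a) (hb : 0 < b) :
    ∫ y in Ioo (0:ℝ) b, Real.sinh (π * (b - y) / a) ^ 2
      = a / (2 * π) * (Real.sinh (π * b / a) * Real.cosh (π * b / a)) - b / 2 := by
  rw [← integral_Ioc_eq_integral_Ioo, ← intervalIntegral.integral_of_le hb.le]
  exact int_sinh_sq ha

lemma ioo_int_cosh_sq {a b : ℝ} (ha : 0 < a) (hb : 0 < b) :
    ∫ y in Ioo (0:ℝ) b, Real.cosh (π * (b - y) / a) ^ 2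
      = a / (2 * π) * (Real.sinh (π * b / a) * Real.cosh (π * b / a)) + b / 2 := by
  rw [← integral_Ioc_eq_integral_Ioo, ← intervalIntegral.integral_of_le hb.le]
  exact int_cosh_sq ha

lemma pdX_div (w : ℝ × ℝ → ℝ) (c : ℝ) (p : ℝ × ℝ) :
    pdX (fun q => w q / c) p = pdX w p / c := by
  simp only [pdX]; exact deriv_div_const c

lemma pdY_div (w : ℝ × ℝ → ℝ) (c : ℝ) (p : ℝ × ℝ) :
    pdY (fun q => w q / c) p = pdY w p / c := by
  simp only [pdY]; exact deriv_div_const c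

lemma energy_int_eig {a b : ℝ} (ha : 0 < a) (hb : 0 < b) :
    ∫ p in Ioo (0:ℝ) a ×ˢ Ioo (0:ℝ) b, (pdX (eig a b) p ^ 2 + pdY (eig a b) p ^ 2)
      = π / 2 * (Real.sinh (π * b / a) * Real.cosh (π * b / a)) := by
  have hfun : (fun p : ℝ × ℝ => pdX (eig a b) p ^ 2 + pdY (eig a b) p ^ 2)
      = fun p : ℝ × ℝ => (π / a) ^ 2 *
          ((fun x => Real.cos (π * x / a) ^ 2) p.1 * (fun y => Real.sinh (π * (b - y) / a) ^ 2) p.2)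
        + (π / a) ^ 2 *
          ((fun x => Real.sin (π * x / a) ^ 2) p.1 *
            (fun y => Real.cosh (π * (b - y) / a) ^ 2) p.2) := by
    funext p; rw [pdX_eig, pdY_eig]; ring
  rw [hfun, restrict_rect_prod]
  have hi1 : Integrable (fun z : ℝ × ℝ =>
      (fun x => Real.cos (π * x / a) ^ 2) z.1 * (fun y => Real.sinh (π * (b - y) / a) ^ 2) z.2)
      ((volume.restrict (Ioo (0:ℝ) a)).prod (volume.restrict (Ioo (0:ℝ) b))) :=
    Integrable.mul_prod
      (cont_int_Ioo (f := fun x => Real.cos (π * x / a) ^ 2) (by fun_prop) 0 a)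
      (cont_int_Ioo (f := fun y => Real.sinh (π * (b - y) / a) ^ 2) (by fun_prop) 0 b)
  have hi2 : Integrable (fun z : ℝ × ℝ =>
      (fun x => Real.sin (π * x / a) ^ 2) z.1 * (fun y => Real.cosh (π * (b - y) / a) ^ 2) z.2)
      ((volume.restrict (Ioo (0:ℝ) a)).prod (volume.restrict (Ioo (0:ℝ) b))) :=
    Integrable.mul_prod
      (cont_int_Ioo (f := fun x => Real.sin (π * x / a) ^ 2) (by fun_prop) 0 a)
      (cont_int_Ioo (f := fun y => Real.cosh (π * (b - y) / a) ^ 2) (by fun_prop) 0 b)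
  rw [integral_add (hi1.const_mul _) (hi2.const_mul _), integral_const_mul, integral_const_mul,
    MeasureTheory.integral_prod_mul (f := fun x => Real.cos (π * x / a) ^ 2)
      (g := fun y => Real.sinh (π * (b - y) / a) ^ 2),
    MeasureTheory.integral_prod_mul (f := fun x => Real.sin (π * x / a) ^ 2)
      (g := fun y => Real.cosh (π * (b - y) / a) ^ 2),
    ioo_int_cos_sq ha, ioo_int_sin_sq ha,
    ioo_int_sinh_sq ha hb, ioo_int_cosh_sq ha hb]
  field_simp
  ring

lemma int_eig_line {a b : ℝ} (ha : 0 < a) :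
    ∫ x in Ioo (0:ℝ) a, eig a b (x, 0) ^ 2 = a / 2 * Real.sinh (π * b / a) ^ 2 := by
  have h : (fun x => eig a b (x, 0) ^ 2)
      = fun x => Real.sin (π * x / a) ^ 2 * Real.sinh (π * b / a) ^ 2 := by
    funext x
    simp only [eig, sub_zero]
    ring
  rw [h, integral_mul_const, ioo_int_sin_sq ha]

lemma K_upper {a b : ℝ} (ha : 0 < a) (hb : 0 < b) :
    ∃ w ∈ Adm (Ioo (0:ℝ) a ×ˢ Ioo (0:ℝ) b) (Ioo (0:ℝ) a ×ˢ ({0} : Set ℝ)),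
      energy (Ioo (0:ℝ) a ×ˢ Ioo (0:ℝ) b) w = π / (a * Real.tanh (π * b / a)) := by
  have hsh : 0 < Real.sinh (π * b / a) := Real.sinh_pos_iff.2 (by positivity)
  have hch : 0 < Real.cosh (π * b / a) := Real.cosh_pos _
  set N : ℝ := a / 2 * Real.sinh (π * b / a) ^ 2 with hN
  have hNpos : 0 < N := by positivity
  set c : ℝ := Real.sqrt N with hcdef
  have hc2 : c ^ 2 = N := Real.sq_sqrt hNpos.le
  have hcpos : 0 < c := Real.sqrt_pos.2 hNpos
  have hce : Continuous fun p : ℝ × ℝ => eig a b p / c := by unfold eig; fun_prop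
  have hde : Differentiable ℝ fun p : ℝ × ℝ => eig a b p / c := by
    have : c ≠ 0 := hcpos.ne'
    unfold eig; fun_prop (disch := assumption)
  have hpd : (fun p : ℝ × ℝ =>
        pdX (fun q => eig a b q / c) p ^ 2 + pdY (fun q => eig a b q / c) p ^ 2)
      = fun p : ℝ × ℝ => (pdX (eig a b) p ^ 2 + pdY (eig a b) p ^ 2) / c ^ 2 := by
    funext p
    rw [pdX_div, pdY_div]
    field_simp
  refine ⟨fun p => eig a b p / c, ⟨?_, ?_, ?_, ?_, ?_⟩, ?_⟩
  · exact hce.continuousOn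
  · exact hde.differentiableOn
  · rw [hpd]
    have hcont : Continuous fun p : ℝ × ℝ =>
        (pdX (eig a b) p ^ 2 + pdY (eig a b) p ^ 2) / c ^ 2 := by
      have h2 : (fun p : ℝ × ℝ => (pdX (eig a b) p ^ 2 + pdY (eig a b) p ^ 2) / c ^ 2)
          = fun p : ℝ × ℝ => ((π / a * Real.cos (π * p.1 / a) * Real.sinh (π * (b - p.2) / a)) ^ 2
              + (-(π / a) * Real.sin (π * p.1 / a) * Real.cosh (π * (b - p.2) / a)) ^ 2) / c ^ 2 := by
        funext p; rw [pdX_eig, pdY_eig]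
      rw [h2]; fun_prop
    exact ((hcont.continuousOn.integrableOn_compact
      (isCompact_Icc.prod isCompact_Icc)).mono_set
      (prod_mono Ioo_subset_Icc_self Ioo_subset_Icc_self))
  · rw [bInt, integral_line]
    have h : (fun x => ((fun p => eig a b p / c) (x, 0)) ^ 2)
        = fun x => eig a b (x, 0) ^ 2 / c ^ 2 := by
      funext x; rw [div_pow]
    show (∫ x in Ioo (0:ℝ) a, (eig a b (x, 0) / c) ^ 2) = 1
    rw [show (fun x => (eig a b (x, 0) / c) ^ 2) = fun x => eig a b (x, 0) ^ 2 / c ^ 2 from h,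
      MeasureTheory.integral_div (c ^ 2) (fun x => eig a b (x, 0) ^ 2), int_eig_line ha, hc2]
    exact div_self hNpos.ne'
  · intro p hp
    show eig a b p / c = 0
    rw [eig_vanish ha hb p hp, zero_div]
  · rw [energy]
    rw [hpd]
    rw [MeasureTheory.integral_div (c ^ 2) (fun p : ℝ × ℝ => pdX (eig a b) p ^ 2 + pdY (eig a b) p ^ 2), energy_int_eig ha hb, hc2, hN, Real.tanh_eq_sinh_div_cosh]
    field_simp



/-! ### Lower bound -/

set_option maxHeartbeats 2000000 in
lemma step {a b ε : ℝ} (ha : 0 < a) (hb : 0 < b) (hε : 0 < ε) {w : ℝ × ℝ → ℝ}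
    (hw : w ∈ Adm (Ioo (0:ℝ) a ×ˢ Ioo (0:ℝ) b) (Ioo (0:ℝ) a ×ˢ ({0} : Set ℝ))) :
    π / (a + 2 * ε) *
        (Real.cosh (π * (b + ε) / (a + 2 * ε)) / Real.sinh (π * (b + ε) / (a + 2 * ε)))
      ≤ energy (Ioo (0:ℝ) a ×ˢ Ioo (0:ℝ) b) w := by
  obtain ⟨hcont, hdiff, hint, hbint, hvanish⟩ := hw
  set a' := a + 2 * ε with ha'
  set b' := b + ε with hb'
  have ha'pos : 0 < a' := by rw [ha']; linarith
  have hb'pos : 0 < b' := by rw [hb']; linarith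
  set k := π / a' with hk
  have hkpos : 0 < k := by rw [hk]; positivity
  have hAopen : IsOpen (Ioo (0:ℝ) a ×ˢ Ioo (0:ℝ) b) := isOpen_Ioo.prod isOpen_Ioo
  have hAmeas : MeasurableSet (Ioo (0:ℝ) a ×ˢ Ioo (0:ℝ) b) := hAopen.measurableSet
  -- the vector field coefficients
  set g₁ : ℝ → ℝ :=
    fun x => k * (Real.cos (π * (x + ε) / a') / Real.sin (π * (x + ε) / a')) with hg₁
  set g₂ : ℝ → ℝ :=
    fun y => -(k * (Real.cosh (π * (b' - y) / a') / Real.sinh (π * (b' - y) / a'))) with hg₂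
  -- positivity of the denominators
  have hsinpos : ∀ x ∈ Icc (0:ℝ) a, 0 < Real.sin (π * (x + ε) / a') := by
    intro x hx
    apply Real.sin_pos_of_pos_of_lt_pi
    · have h1 : 0 < x + ε := by linarith [hx.1]
      positivity
    · rw [div_lt_iff₀ ha'pos]
      have : x + ε < a' := by rw [ha']; linarith [hx.2]
      nlinarith [Real.pi_pos]
  have hsinhpos : ∀ y ∈ Icc (0:ℝ) b, 0 < Real.sinh (π * (b' - y) / a') := by
    intro y hy
    apply Real.sinh_pos_iff.2
    have h1 : 0 < b' - y := by rw [hb']; linarith [hy.2]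
    positivity
  -- derivatives of the coefficients
  have hsin' : ∀ x : ℝ, HasDerivAt (fun x => Real.sin (π * (x + ε) / a'))
      (π / a' * Real.cos (π * (x + ε) / a')) x := by
    intro x
    have h := (hd_sin a' (x + ε)).comp x ((hasDerivAt_id x).add_const ε)
    simpa [Function.comp_def] using h
  have hcos' : ∀ x : ℝ, HasDerivAt (fun x => Real.cos (π * (x + ε) / a'))
      (-(π / a' * Real.sin (π * (x + ε) / a'))) x := by
    intro x
    have h := (hd_cos a' (x + ε)).comp x ((hasDerivAt_id x).add_const ε)
    simpa [Function.comp_def] using h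
  have hg₁d : ∀ x ∈ Icc (0:ℝ) a, HasDerivAt g₁ (-k ^ 2 - g₁ x ^ 2) x := by
    intro x hx
    have hs := (hsinpos x hx).ne'
    have hq := (hcos' x).div (hsin' x) hs
    have h := hq.const_mul k
    refine h.congr_deriv ?_
    simp only [hg₁, hk]
    field_simp
  have hg₂d : ∀ y ∈ Icc (0:ℝ) b, HasDerivAt g₂ (k ^ 2 - g₂ y ^ 2) y := by
    intro y hy
    have hs := (hsinhpos y hy).ne'
    have hq := ((hd_cosh a' b' y).div (hd_sinh a' b' y) hs).const_mul k
    have h := hq.neg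
    refine h.congr_deriv ?_
    simp only [hg₂, hk]
    field_simp
    ring
  -- continuity and bounds for the coefficients
  have hg₁c : ContinuousOn g₁ (Icc (0:ℝ) a) := by
    rw [hg₁]
    exact continuousOn_const.mul (ContinuousOn.div
      (Continuous.continuousOn (by fun_prop)) (Continuous.continuousOn (by fun_prop))
      fun x hx => (hsinpos x hx).ne')
  have hg₂c : ContinuousOn g₂ (Icc (0:ℝ) b) := by
    rw [hg₂]
    exact (continuousOn_const.mul (ContinuousOn.div
      (Continuous.continuousOn (by fun_prop)) (Continuous.continuousOn (by fun_prop))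
      fun y hy => (hsinhpos y hy).ne')).neg
  clear_value g₂ g₁ k b' a'
  obtain ⟨M₁, hM₁⟩ := isCompact_Icc.exists_bound_of_continuousOn hg₁c
  obtain ⟨M₂, hM₂⟩ := isCompact_Icc.exists_bound_of_continuousOn hg₂c
  obtain ⟨Cw, hCw⟩ := (isCompact_Icc.prod isCompact_Icc).exists_bound_of_continuousOn
    (closA ha hb ▸ hcont)
  -- measurability of the partial derivatives
  obtain ⟨G, hGc, hGeq⟩ := exists_cont_ext w (closure (Ioo (0:ℝ) a ×ˢ Ioo (0:ℝ) b))
    isClosed_closure hcont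
  have hGeq' : ∀ q ∈ Ioo (0:ℝ) a ×ˢ Ioo (0:ℝ) b, G q = w q := fun q hq =>
    hGeq q (subset_closure hq)
  have hpdXm : AEStronglyMeasurable (pdX w)
      (volume.restrict (Ioo (0:ℝ) a ×ˢ Ioo (0:ℝ) b)) := by
    refine ((measurable_pdX_of_continuous hGc).aestronglyMeasurable).congr ?_
    filter_upwards [ae_restrict_mem hAmeas] with p hp
    exact (pdX_congr_on_open hAopen hGeq' hp).symm
  have hpdYm : AEStronglyMeasurable (pdY w)
      (volume.restrict (Ioo (0:ℝ) a ×ˢ Ioo (0:ℝ) b)) := by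
    refine ((measurable_pdY_of_continuous hGc).aestronglyMeasurable).congr ?_
    filter_upwards [ae_restrict_mem hAmeas] with p hp
    exact (pdY_congr_on_open hAopen hGeq' hp).symm
  have hwm : AEStronglyMeasurable w (volume.restrict (Ioo (0:ℝ) a ×ˢ Ioo (0:ℝ) b)) :=
    (hcont.mono subset_closure).aestronglyMeasurable hAmeas
  have hg1m : AEStronglyMeasurable (fun p : ℝ × ℝ => g₁ p.1)
      (volume.restrict (Ioo (0:ℝ) a ×ˢ Ioo (0:ℝ) b)) :=
    (hg₁c.comp continuous_fst.continuousOn fun p hp => Ioo_subset_Icc_self hp.1).aestronglyMeasurable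
      hAmeas
  have hg2m : AEStronglyMeasurable (fun p : ℝ × ℝ => g₂ p.2)
      (volume.restrict (Ioo (0:ℝ) a ×ˢ Ioo (0:ℝ) b)) :=
    (hg₂c.comp continuous_snd.continuousOn fun p hp => Ioo_subset_Icc_self hp.2).aestronglyMeasurable
      hAmeas
  have hw2m : AEStronglyMeasurable (fun p : ℝ × ℝ => w p ^ 2)
      (volume.restrict (Ioo (0:ℝ) a ×ˢ Ioo (0:ℝ) b)) := by
    have h : (fun p : ℝ × ℝ => w p ^ 2) = fun p => w p * w p := funext fun p => pow_two (w p)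
    rw [h]; exact hwm.mul hwm
  have hcoef1 : AEStronglyMeasurable (fun p : ℝ × ℝ => -k ^ 2 - g₁ p.1 ^ 2)
      (volume.restrict (Ioo (0:ℝ) a ×ˢ Ioo (0:ℝ) b)) := by
    have h : (fun p : ℝ × ℝ => -k ^ 2 - g₁ p.1 ^ 2)
        = fun p : ℝ × ℝ => -k ^ 2 - g₁ p.1 * g₁ p.1 := by
      funext p; ring
    rw [h]
    exact aestronglyMeasurable_const.sub (hg1m.mul hg1m)
  have hcoef2 : AEStronglyMeasurable (fun p : ℝ × ℝ => k ^ 2 - g₂ p.2 ^ 2)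
      (volume.restrict (Ioo (0:ℝ) a ×ˢ Ioo (0:ℝ) b)) := by
    have h : (fun p : ℝ × ℝ => k ^ 2 - g₂ p.2 ^ 2)
        = fun p : ℝ × ℝ => k ^ 2 - g₂ p.2 * g₂ p.2 := by
      funext p; ring
    rw [h]
    exact aestronglyMeasurable_const.sub (hg2m.mul hg2m)
  -- the divergence terms
  set P₁ : ℝ × ℝ → ℝ :=
    fun p => 2 * w p * pdX w p * g₁ p.1 + w p ^ 2 * (-k ^ 2 - g₁ p.1 ^ 2) with hP₁
  set P₂ : ℝ × ℝ → ℝ :=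
    fun p => 2 * w p * pdY w p * g₂ p.2 + w p ^ 2 * (k ^ 2 - g₂ p.2 ^ 2) with hP₂
  clear_value P₂ P₁
  have hP₁m : AEStronglyMeasurable P₁ (volume.restrict (Ioo (0:ℝ) a ×ˢ Ioo (0:ℝ) b)) := by
    rw [hP₁]
    exact (((hwm.const_mul 2).mul hpdXm).mul hg1m).add (hw2m.mul hcoef1)
  have hP₂m : AEStronglyMeasurable P₂ (volume.restrict (Ioo (0:ℝ) a ×ˢ Ioo (0:ℝ) b)) := by
    rw [hP₂]
    exact (((hwm.const_mul 2).mul hpdYm).mul hg2m).add (hw2m.mul hcoef2)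
  -- integrability of the divergence terms
  have hfin : volume (Ioo (0:ℝ) a ×ˢ Ioo (0:ℝ) b) < ⊤ :=
    lt_of_le_of_lt (measure_mono (prod_mono Ioo_subset_Icc_self Ioo_subset_Icc_self))
      (isCompact_Icc.prod isCompact_Icc).measure_lt_top
  have hdom : IntegrableOn
      (fun p : ℝ × ℝ => (pdX w p ^ 2 + pdY w p ^ 2) + Cw ^ 2 * (2 * M₁ ^ 2 + 2 * M₂ ^ 2 + k ^ 2))
      (Ioo (0:ℝ) a ×ˢ Ioo (0:ℝ) b) :=
    hint.add (integrableOn_const hfin.ne)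
  have hbnd : ∀ p ∈ Ioo (0:ℝ) a ×ˢ Ioo (0:ℝ) b,
      w p ^ 2 ≤ Cw ^ 2 ∧ g₁ p.1 ^ 2 ≤ M₁ ^ 2 ∧ g₂ p.2 ^ 2 ≤ M₂ ^ 2 := by
    intro p hp
    have h1 : ‖w p‖ ≤ Cw := hCw p ⟨Ioo_subset_Icc_self hp.1, Ioo_subset_Icc_self hp.2⟩
    have h2 : ‖g₁ p.1‖ ≤ M₁ := hM₁ p.1 (Ioo_subset_Icc_self hp.1)
    have h3 : ‖g₂ p.2‖ ≤ M₂ := hM₂ p.2 (Ioo_subset_Icc_self hp.2)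
    rw [Real.norm_eq_abs] at h1 h2 h3
    refine ⟨?_, ?_, ?_⟩ <;>
      nlinarith [abs_nonneg (w p), sq_abs (w p), abs_nonneg (g₁ p.1), sq_abs (g₁ p.1),
        abs_nonneg (g₂ p.2), sq_abs (g₂ p.2)]
  have hP₁int : IntegrableOn P₁ (Ioo (0:ℝ) a ×ˢ Ioo (0:ℝ) b) := by
    refine Integrable.mono' hdom hP₁m ?_
    filter_upwards [ae_restrict_mem hAmeas] with p hp
    obtain ⟨hw2, hgb1, hgb2⟩ := hbnd p hp
    have e2 : (w p * g₁ p.1) ^ 2 ≤ Cw ^ 2 * M₁ ^ 2 := by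
      rw [mul_pow]; exact mul_le_mul hw2 hgb1 (sq_nonneg _) ((sq_nonneg (w p)).trans hw2)
    have e4 : w p ^ 2 * (k ^ 2 + g₁ p.1 ^ 2) ≤ Cw ^ 2 * (k ^ 2 + M₁ ^ 2) :=
      mul_le_mul hw2 (by linarith) (by positivity) ((sq_nonneg (w p)).trans hw2)
    rw [Real.norm_eq_abs, abs_le]
    simp only [hP₁]
    constructor
    · nlinarith [sq_nonneg (pdX w p + w p * g₁ p.1), sq_nonneg (pdY w p), sq_nonneg M₂,
        mul_nonneg (sq_nonneg Cw) (sq_nonneg M₂)]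
    · nlinarith [sq_nonneg (pdX w p - w p * g₁ p.1), sq_nonneg (pdY w p), sq_nonneg M₂,
        mul_nonneg (sq_nonneg Cw) (sq_nonneg M₂),
        mul_nonneg (sq_nonneg (w p)) (by positivity : (0:ℝ) ≤ k ^ 2 + g₁ p.1 ^ 2)]
  have hP₂int : IntegrableOn P₂ (Ioo (0:ℝ) a ×ˢ Ioo (0:ℝ) b) := by
    refine Integrable.mono' hdom hP₂m ?_
    filter_upwards [ae_restrict_mem hAmeas] with p hp
    obtain ⟨hw2, hgb1, hgb2⟩ := hbnd p hp
    have e2 : (w p * g₂ p.2) ^ 2 ≤ Cw ^ 2 * M₂ ^ 2 := by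
      rw [mul_pow]; exact mul_le_mul hw2 hgb2 (sq_nonneg _) ((sq_nonneg (w p)).trans hw2)
    have e4 : w p ^ 2 * (k ^ 2 + g₂ p.2 ^ 2) ≤ Cw ^ 2 * (k ^ 2 + M₂ ^ 2) :=
      mul_le_mul hw2 (by linarith) (by positivity) ((sq_nonneg (w p)).trans hw2)
    rw [Real.norm_eq_abs, abs_le]
    simp only [hP₂]
    constructor
    · nlinarith [sq_nonneg (pdY w p + w p * g₂ p.2), sq_nonneg (pdX w p), sq_nonneg M₁,
        mul_nonneg (sq_nonneg Cw) (sq_nonneg M₁),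
        mul_nonneg (sq_nonneg (w p)) (by positivity : (0:ℝ) ≤ k ^ 2 + g₂ p.2 ^ 2)]
    · nlinarith [sq_nonneg (pdY w p - w p * g₂ p.2), sq_nonneg (pdX w p), sq_nonneg M₁,
        mul_nonneg (sq_nonneg Cw) (sq_nonneg M₁),
        mul_nonneg (sq_nonneg (w p)) (by positivity : (0:ℝ) ≤ k ^ 2 + g₂ p.2 ^ 2)]
  -- boundary values of w
  have hv0 : ∀ y ∈ Ioo (0:ℝ) b, w (0, y) = 0 := by
    intro y hy
    apply hvanish
    refine ⟨?_, ?_⟩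
    · rw [frontA ha hb]; right; exact ⟨by simp, Ioo_subset_Icc_self hy⟩
    · exact fun h => lt_irrefl (0:ℝ) h.1.1
  have hva : ∀ y ∈ Ioo (0:ℝ) b, w (a, y) = 0 := by
    intro y hy
    apply hvanish
    refine ⟨?_, ?_⟩
    · rw [frontA ha hb]; right; exact ⟨by simp, Ioo_subset_Icc_self hy⟩
    · exact fun h => lt_irrefl a h.1.2
  have hvb : ∀ x ∈ Icc (0:ℝ) a, w (x, b) = 0 := by
    intro x hx
    apply hvanish
    refine ⟨?_, ?_⟩
    · rw [frontA ha hb]; left; exact ⟨hx, by simp⟩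
    · exact fun h => hb.ne' (mem_singleton_iff.1 h.2)
  -- Fubini for P₁: the integral vanishes
  have hrew := restrict_rect_prod a b
  have hProd₁ : Integrable P₁ ((volume.restrict (Ioo (0:ℝ) a)).prod
      (volume.restrict (Ioo (0:ℝ) b))) := by
    rw [← hrew]; exact hP₁int
  have hProd₂ : Integrable P₂ ((volume.restrict (Ioo (0:ℝ) a)).prod
      (volume.restrict (Ioo (0:ℝ) b))) := by
    rw [← hrew]; exact hP₂int
  have hzero1 : (fun y => ∫ x in Ioo (0:ℝ) a, P₁ (x, y))
      =ᵐ[volume.restrict (Ioo (0:ℝ) b)] 0 := by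
    filter_upwards [hProd₁.prod_left_ae, ae_restrict_mem measurableSet_Ioo] with y hyint hy
    have hFc : ContinuousOn (fun x => w (x, y) ^ 2 * g₁ x) (Icc (0:ℝ) a) := by
      refine ContinuousOn.mul ?_ hg₁c
      have hmap : ∀ x ∈ Icc (0:ℝ) a,
          ((x, y) : ℝ × ℝ) ∈ closure (Ioo (0:ℝ) a ×ˢ Ioo (0:ℝ) b) := by
        intro x hx; rw [closA ha hb]; exact ⟨hx, Ioo_subset_Icc_self hy⟩
      exact ((hcont.comp (Continuous.continuousOn (by fun_prop)) hmap)).pow 2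
    have hFd : ∀ x ∈ Ioo (0:ℝ) a,
        HasDerivAt (fun x => w (x, y) ^ 2 * g₁ x) (P₁ (x, y)) x := by
      intro x hx
      have hpA : ((x, y) : ℝ × ℝ) ∈ Ioo (0:ℝ) a ×ˢ Ioo (0:ℝ) b := ⟨hx, hy⟩
      have hdp : DifferentiableAt ℝ w (x, y) := hdiff.differentiableAt (hAopen.mem_nhds hpA)
      have hinner : DifferentiableAt ℝ (fun x : ℝ => ((x, y) : ℝ × ℝ)) x :=
        differentiableAt_id.prodMk (differentiableAt_const y)
      have hslice : DifferentiableAt ℝ (fun x : ℝ => w (x, y)) x := hdp.comp x hinner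
      have hsd : HasDerivAt (fun x : ℝ => w (x, y)) (pdX w (x, y)) x := by
        have h := hslice.hasDerivAt
        simpa [pdX] using h
      have h := (hsd.pow 2).mul (hg₁d x (Ioo_subset_Icc_self hx))
      refine h.congr_deriv ?_
      simp only [hP₁]
      simp only [Pi.pow_apply]
      ring
    have hFi : IntervalIntegrable (fun x => P₁ (x, y)) volume 0 a := by
      rw [intervalIntegrable_iff_integrableOn_Ioo_of_le ha.le]
      exact hyint
    have hftc := intervalIntegral.integral_eq_sub_of_hasDerivAt_of_le ha.le hFc hFd hFi
    show (∫ x in Ioo (0:ℝ) a, P₁ (x, y)) = 0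
    rw [← integral_Ioc_eq_integral_Ioo, ← intervalIntegral.integral_of_le ha.le, hftc,
      hva y hy, hv0 y hy]
    ring
  have hintP₁ : ∫ p in Ioo (0:ℝ) a ×ˢ Ioo (0:ℝ) b, P₁ p = 0 := by
    rw [hrew, MeasureTheory.integral_prod_symm P₁ hProd₁, integral_congr_ae hzero1]
    simp
  -- Fubini for P₂: the integral is lamε
  have hzero2 : (fun x => ∫ y in Ioo (0:ℝ) b, P₂ (x, y))
      =ᵐ[volume.restrict (Ioo (0:ℝ) a)]
      (fun x => k * (Real.cosh (π * b' / a') / Real.sinh (π * b' / a')) * w (x, 0) ^ 2) := by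
    filter_upwards [hProd₂.prod_right_ae, ae_restrict_mem measurableSet_Ioo] with x hxint hx
    have hHc : ContinuousOn (fun y => w (x, y) ^ 2 * g₂ y) (Icc (0:ℝ) b) := by
      refine ContinuousOn.mul ?_ hg₂c
      have hmap : ∀ y ∈ Icc (0:ℝ) b,
          ((x, y) : ℝ × ℝ) ∈ closure (Ioo (0:ℝ) a ×ˢ Ioo (0:ℝ) b) := by
        intro y hy; rw [closA ha hb]; exact ⟨Ioo_subset_Icc_self hx, hy⟩
      exact ((hcont.comp (Continuous.continuousOn (by fun_prop)) hmap)).pow 2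
    have hHd : ∀ y ∈ Ioo (0:ℝ) b,
        HasDerivAt (fun y => w (x, y) ^ 2 * g₂ y) (P₂ (x, y)) y := by
      intro y hy
      have hpA : ((x, y) : ℝ × ℝ) ∈ Ioo (0:ℝ) a ×ˢ Ioo (0:ℝ) b := ⟨hx, hy⟩
      have hdp : DifferentiableAt ℝ w (x, y) := hdiff.differentiableAt (hAopen.mem_nhds hpA)
      have hinner : DifferentiableAt ℝ (fun y : ℝ => ((x, y) : ℝ × ℝ)) y :=
        (differentiableAt_const x).prodMk differentiableAt_id
      have hslice : DifferentiableAt ℝ (fun y : ℝ => w (x, y)) y := hdp.comp y hinner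
      have hsd : HasDerivAt (fun y : ℝ => w (x, y)) (pdY w (x, y)) y := by
        have h := hslice.hasDerivAt
        simpa [pdY] using h
      have h := (hsd.pow 2).mul (hg₂d y (Ioo_subset_Icc_self hy))
      refine h.congr_deriv ?_
      simp only [hP₂]
      simp only [Pi.pow_apply]
      ring
    have hHi : IntervalIntegrable (fun y => P₂ (x, y)) volume 0 b := by
      rw [intervalIntegrable_iff_integrableOn_Ioo_of_le hb.le]
      exact hxint
    have hftc := intervalIntegral.integral_eq_sub_of_hasDerivAt_of_le hb.le hHc hHd hHi
    show (∫ y in Ioo (0:ℝ) b, P₂ (x, y))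
      = k * (Real.cosh (π * b' / a') / Real.sinh (π * b' / a')) * w (x, 0) ^ 2
    rw [← integral_Ioc_eq_integral_Ioo, ← intervalIntegral.integral_of_le hb.le, hftc,
      hvb x (Ioo_subset_Icc_self hx)]
    simp only [hg₂, sub_zero]
    ring
  have hbb : ∫ x in Ioo (0:ℝ) a, w (x, 0) ^ 2 = 1 := by
    have hb1 := hbint
    rw [bInt, integral_line] at hb1
    exact hb1
  have hintP₂ : ∫ p in Ioo (0:ℝ) a ×ˢ Ioo (0:ℝ) b, P₂ p
      = k * (Real.cosh (π * b' / a') / Real.sinh (π * b' / a')) := by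
    rw [hrew, MeasureTheory.integral_prod P₂ hProd₂, integral_congr_ae hzero2,
      MeasureTheory.integral_const_mul, hbb, mul_one]
  -- combining
  have hsum : ∫ p in Ioo (0:ℝ) a ×ˢ Ioo (0:ℝ) b, (P₁ p + P₂ p)
      = k * (Real.cosh (π * b' / a') / Real.sinh (π * b' / a')) := by
    rw [MeasureTheory.integral_add hP₁int hP₂int, hintP₁, hintP₂, zero_add]
  have hmono : ∫ p in Ioo (0:ℝ) a ×ˢ Ioo (0:ℝ) b, (P₁ p + P₂ p)
      ≤ energy (Ioo (0:ℝ) a ×ˢ Ioo (0:ℝ) b) w := by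
    rw [energy]
    apply setIntegral_mono_on (hP₁int.add hP₂int) hint hAmeas
    intro p hp
    simp only [Pi.add_apply, hP₁, hP₂]
    nlinarith [sq_nonneg (pdX w p - w p * g₁ p.1), sq_nonneg (pdY w p - w p * g₂ p.2)]
  calc k * (Real.cosh (π * b' / a') / Real.sinh (π * b' / a'))
      = ∫ p in Ioo (0:ℝ) a ×ˢ Ioo (0:ℝ) b, (P₁ p + P₂ p) := hsum.symm
    _ ≤ energy (Ioo (0:ℝ) a ×ˢ Ioo (0:ℝ) b) w := hmono

lemma K_lower {a b : ℝ} (ha : 0 < a) (hb : 0 < b) {w : ℝ × ℝ → ℝ}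
    (hw : w ∈ Adm (Ioo (0:ℝ) a ×ˢ Ioo (0:ℝ) b) (Ioo (0:ℝ) a ×ˢ ({0} : Set ℝ))) :
    π / (a * Real.tanh (π * b / a)) ≤ energy (Ioo (0:ℝ) a ×ˢ Ioo (0:ℝ) b) w := by
  have hsh : 0 < Real.sinh (π * b / a) := Real.sinh_pos_iff.2 (by positivity)
  have hch : 0 < Real.cosh (π * b / a) := Real.cosh_pos _
  set f : ℝ → ℝ := fun ε => π / (a + 2 * ε) *
    (Real.cosh (π * (b + ε) / (a + 2 * ε)) / Real.sinh (π * (b + ε) / (a + 2 * ε))) with hf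
  have hf0 : f 0 = π / (a * Real.tanh (π * b / a)) := by
    simp only [hf]
    norm_num
    rw [Real.tanh_eq_sinh_div_cosh]
    field_simp
  have hcontf : ContinuousAt f 0 := by
    have hden : a + 2 * (0:ℝ) ≠ 0 := by simpa using ha.ne'
    have h2 : ContinuousAt (fun ε : ℝ => π * (b + ε) / (a + 2 * ε)) 0 :=
      ContinuousAt.div (f := fun ε : ℝ => π * (b + ε)) (g := fun ε : ℝ => a + 2 * ε)
        (by fun_prop) (by fun_prop) hden
    have h3 : ContinuousAt (fun ε : ℝ => Real.cosh (π * (b + ε) / (a + 2 * ε))) 0 :=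
      Real.continuous_cosh.continuousAt.comp h2
    have h4 : ContinuousAt (fun ε : ℝ => Real.sinh (π * (b + ε) / (a + 2 * ε))) 0 :=
      Real.continuous_sinh.continuousAt.comp h2
    have h5 : (fun ε : ℝ => Real.sinh (π * (b + ε) / (a + 2 * ε))) 0 ≠ 0 := by
      show Real.sinh (π * (b + 0) / (a + 2 * 0)) ≠ 0
      simpa using hsh.ne'
    have h6 : ContinuousAt (fun ε : ℝ => π / (a + 2 * ε)) 0 :=
      ContinuousAt.div (f := fun _ : ℝ => π) (g := fun ε : ℝ => a + 2 * ε)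
        continuousAt_const (by fun_prop) hden
    rw [hf]
    exact h6.mul (h3.div h4 h5)
  have htend : Filter.Tendsto f (nhdsWithin 0 (Ioi 0))
      (nhds (π / (a * Real.tanh (π * b / a)))) := by
    rw [← hf0]
    exact hcontf.continuousWithinAt
  apply le_of_tendsto htend
  apply eventually_nhdsWithin_of_forall
  intro ε hε
  exact step ha hb hε hw

/-- for the rectangle `A = (0,a)×(0,b)` and `Γ = (0,a)×{0}`, the
function `v(x,y) = sin(πx/a)·sinh(π(b−y)/a)` is positive on `A`, harmonic,
vanishes on `∂A∖Γ`, and satisfies `∂v/∂ν = λ v` on `Γ` (outer normal `(0,-1)`)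
with `λ = π/(a·tanh(πb/a))`; consequently `K(Γ,A) = π/(a·tanh(πb/a))`. -/
theorem stmt13 (a b : ℝ) (ha : 0 < a) (hb : 0 < b) :
    let A : Set (ℝ × ℝ) := Ioo 0 a ×ˢ Ioo 0 b
    let Γ : Set (ℝ × ℝ) := Ioo 0 a ×ˢ ({0} : Set ℝ)
    let v : ℝ × ℝ → ℝ := fun p => Real.sin (π * p.1 / a) * Real.sinh (π * (b - p.2) / a)
    let lam : ℝ := π / (a * Real.tanh (π * b / a))
    (∀ p ∈ A, 0 < v p) ∧
    (∀ p ∈ A, lap v p = 0) ∧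
    (∀ p ∈ frontier A \ Γ, v p = 0) ∧
    (∀ x ∈ Ioo (0:ℝ) a, - pdY v (x, 0) = lam * v (x, 0)) ∧
    Kconst Γ A = lam := by
  intro A Γ v lam
  have hsh : 0 < Real.sinh (π * b / a) := Real.sinh_pos_iff.2 (by positivity)
  have hch : 0 < Real.cosh (π * b / a) := Real.cosh_pos _
  refine ⟨?_, ?_, ?_, ?_, ?_⟩
  · -- positivity
    rintro ⟨x, y⟩ ⟨hx, hy⟩
    have h1 : 0 < Real.sin (π * x / a) := by
      apply Real.sin_pos_of_pos_of_lt_pi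
      · have := hx.1; positivity
      · rw [div_lt_iff₀ ha]
        nlinarith [Real.pi_pos, hx.2]
    have h2 : 0 < Real.sinh (π * (b - y) / a) := by
      apply Real.sinh_pos_iff.2
      have h3 : 0 < b - y := by linarith [hy.2]
      positivity
    exact mul_pos h1 h2
  · -- harmonicity
    intro p _
    exact lap_eig a b p
  · -- boundary vanishing
    exact eig_vanish ha hb
  · -- Robin condition on Γ
    intro x hx
    show -pdY (eig a b) (x, 0) = lam * eig a b (x, 0)
    rw [pdY_eig]
    show -(-(π / a) * Real.sin (π * x / a) * Real.cosh (π * (b - 0) / a))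
      = π / (a * Real.tanh (π * b / a)) * (Real.sin (π * x / a) * Real.sinh (π * (b - 0) / a))
    rw [sub_zero, Real.tanh_eq_sinh_div_cosh]
    field_simp
  · -- the value of K
    show Kconst (Ioo (0:ℝ) a ×ˢ ({0} : Set ℝ)) (Ioo (0:ℝ) a ×ˢ Ioo (0:ℝ) b)
      = π / (a * Real.tanh (π * b / a))
    obtain ⟨w₀, hw₀, he₀⟩ := K_upper ha hb
    rw [Kconst]
    have hbdd : BddBelow (energy (Ioo (0:ℝ) a ×ˢ Ioo (0:ℝ) b) ''
        Adm (Ioo (0:ℝ) a ×ˢ Ioo (0:ℝ) b) (Ioo (0:ℝ) a ×ˢ ({0} : Set ℝ))) := by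
      refine ⟨0, ?_⟩
      rintro r ⟨u, hu, rfl⟩
      exact MeasureTheory.integral_nonneg fun p => by positivity
    have hne : (energy (Ioo (0:ℝ) a ×ˢ Ioo (0:ℝ) b) w₀) ∈
        energy (Ioo (0:ℝ) a ×ˢ Ioo (0:ℝ) b) ''
          Adm (Ioo (0:ℝ) a ×ˢ Ioo (0:ℝ) b) (Ioo (0:ℝ) a ×ˢ ({0} : Set ℝ)) := ⟨w₀, hw₀, rfl⟩
    apply le_antisymm
    · exact csInf_le hbdd (he₀ ▸ hne)
    · apply le_csInf ⟨_, hne⟩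
      rintro r ⟨u, hu, rfl⟩
      exact K_lower ha hb hu
end
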